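/- arXiv:2209.08951 — 4 statements merged into one kernel-verified Lean document; each statement's English description precedes it below -/
import Mathlib

section
/- Let f : ℝ^d → ℝ be α-strongly convex and β-smooth with 0 < α ≤ β, let Θ ⊆ ℝ^d be nonempty closed convex, and let η ∈ (0, 2/β). Then the projected gradient step θ ↦ Π_Θ(θ − η∇f(θ)) is γ-contractive with γ = √(1 − 2αη + αβη²), i.e., ‖Π_Θ(θ − η∇f(θ)) − Π_Θ(θ' − η∇f(θ'))‖ ≤ γ‖θ − θ'‖ for all θ, θ'. -/
open scoped RealInnerProductSpace

set_option maxHeartbeats 1000000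

section AuxPGD

variable {d : ℕ}

private lemma pgd_line_hasDerivAt (f : EuclideanSpace ℝ (Fin d) → ℝ)
    (f' : EuclideanSpace ℝ (Fin d) → EuclideanSpace ℝ (Fin d))
    (hgrad : ∀ θ, HasGradientAt f (f' θ) θ) (x v : EuclideanSpace ℝ (Fin d)) (t : ℝ) :
    HasDerivAt (fun s : ℝ => f (x + s • v)) ⟪f' (x + t • v), v⟫ t := by
  have hL : HasDerivAt (fun s : ℝ => x + s • v) v t := by
    simpa using ((hasDerivAt_id t).smul_const v).const_add x
  have h := (hgrad (x + t • v)).hasFDerivAt.comp_hasDerivAt t hL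
  simp [InnerProductSpace.toDual_apply_apply] at h; exact h

private lemma pgd_descent (f : EuclideanSpace ℝ (Fin d) → ℝ)
    (f' : EuclideanSpace ℝ (Fin d) → EuclideanSpace ℝ (Fin d))
    (hgrad : ∀ θ, HasGradientAt f (f' θ) θ) (β : ℝ) (hβ : 0 ≤ β)
    (hsm : ∀ θ θ' : EuclideanSpace ℝ (Fin d), ‖f' θ - f' θ'‖ ≤ β * ‖θ - θ'‖)
    (x y : EuclideanSpace ℝ (Fin d)) :
    f y - f x - ⟪f' x, y - x⟫ ≤ β / 2 * ‖y - x‖ ^ 2 := by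
  set v := y - x with hv
  have hf'cont : Continuous f' := by
    refine (LipschitzWith.of_dist_le_mul (K := β.toNNReal) (f := f') ?_).continuous
    intro a b
    rw [Real.coe_toNNReal β hβ]
    simpa [dist_eq_norm] using hsm a b
  have hlinecont : Continuous fun t : ℝ => x + t • v := by continuity
  have hcont : Continuous fun t : ℝ => ⟪f' (x + t • v), v⟫ :=
    ((hf'cont.comp hlinecont).inner continuous_const)
  have hint : IntervalIntegrable (fun t : ℝ => ⟪f' (x + t • v), v⟫) MeasureTheory.volume 0 1 :=
    hcont.intervalIntegrable 0 1
  have key : ∫ t in (0:ℝ)..1, ⟪f' (x + t • v), v⟫ = f y - f x := by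
    have h := intervalIntegral.integral_eq_sub_of_hasDerivAt
      (f := fun s : ℝ => f (x + s • v)) (f' := fun t : ℝ => ⟪f' (x + t • v), v⟫)
      (fun t _ => pgd_line_hasDerivAt f f' hgrad x v t) hint
    simpa [hv] using h
  have hboundfun : ∀ t ∈ Set.Icc (0:ℝ) 1,
      ⟪f' (x + t • v), v⟫ - ⟪f' x, v⟫ ≤ β * ‖v‖ ^ 2 * t := by
    intro t ht
    have h1 : ⟪f' (x + t • v) - f' x, v⟫ ≤ ‖f' (x + t • v) - f' x‖ * ‖v‖ :=
      real_inner_le_norm _ _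
    have h2 : ‖f' (x + t • v) - f' x‖ ≤ β * (t * ‖v‖) := by
      have := hsm (x + t • v) x
      simpa [norm_smul, abs_of_nonneg ht.1] using this
    have h3 : ‖f' (x + t • v) - f' x‖ * ‖v‖ ≤ β * (t * ‖v‖) * ‖v‖ :=
      mul_le_mul_of_nonneg_right h2 (norm_nonneg v)
    have h4 : ⟪f' (x + t • v) - f' x, v⟫ = ⟪f' (x + t • v), v⟫ - ⟪f' x, v⟫ := by
      rw [inner_sub_left]
    nlinarith [h1, h3]
  have hmono : ∫ t in (0:ℝ)..1, (⟪f' (x + t • v), v⟫ - ⟪f' x, v⟫) ≤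
      ∫ t in (0:ℝ)..1, β * ‖v‖ ^ 2 * t := by
    apply intervalIntegral.integral_mono_on (by norm_num)
    · exact hint.sub (intervalIntegrable_const)
    · exact (Continuous.intervalIntegrable (by continuity) 0 1)
    · exact hboundfun
  have hleft : ∫ t in (0:ℝ)..1, (⟪f' (x + t • v), v⟫ - ⟪f' x, v⟫) =
      (f y - f x) - ⟪f' x, v⟫ := by
    rw [intervalIntegral.integral_sub hint intervalIntegrable_const, key]
    simp
  have hright : ∫ t in (0:ℝ)..1, β * ‖v‖ ^ 2 * t = β / 2 * ‖v‖ ^ 2 := by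
    rw [intervalIntegral.integral_const_mul, integral_id]
    ring
  rw [hleft, hright] at hmono
  linarith

private lemma pgd_cocoercive (f : EuclideanSpace ℝ (Fin d) → ℝ)
    (f' : EuclideanSpace ℝ (Fin d) → EuclideanSpace ℝ (Fin d))
    (β : ℝ) (hβ : 0 < β)
    (hcvx : ∀ θ θ' : EuclideanSpace ℝ (Fin d), 0 ≤ f θ - f θ' - ⟪f' θ', θ - θ'⟫)
    (hdesc : ∀ x y : EuclideanSpace ℝ (Fin d),
      f y - f x - ⟪f' x, y - x⟫ ≤ β / 2 * ‖y - x‖ ^ 2)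
    (x y : EuclideanSpace ℝ (Fin d)) :
    ‖f' x - f' y‖ ^ 2 ≤ β * ⟪f' x - f' y, x - y⟫ := by
  have half : ∀ a b : EuclideanSpace ℝ (Fin d),
      1 / (2 * β) * ‖f' b - f' a‖ ^ 2 ≤ f b - f a - ⟪f' a, b - a⟫ := by
    intro a b
    set g := f' b - f' a with hg
    set z := b - β⁻¹ • g with hz
    have h1 := hcvx z a
    have h2 := hdesc b z
    have e1 : z - b = -(β⁻¹ • g) := by rw [hz]; abel
    have e2 : ⟪f' b, z - b⟫ = -(β⁻¹ * ⟪f' b, g⟫) := by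
      rw [e1, inner_neg_right, inner_smul_right]
    have e3 : ‖z - b‖ ^ 2 = β⁻¹ ^ 2 * ‖g‖ ^ 2 := by
      rw [e1, norm_neg, norm_smul]
      simp [abs_of_nonneg (inv_nonneg.mpr hβ.le), mul_pow]
    have e4 : z - a = (b - a) - β⁻¹ • g := by rw [hz]; abel
    have e5 : ⟪f' a, z - a⟫ = ⟪f' a, b - a⟫ - β⁻¹ * ⟪f' a, g⟫ := by
      rw [e4, inner_sub_right, inner_smul_right]
    have e6 : ⟪f' b, g⟫ - ⟪f' a, g⟫ = ‖g‖ ^ 2 := by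
      rw [← inner_sub_left, ← hg, real_inner_self_eq_norm_sq]
    rw [e2, e3] at h2
    rw [e5] at h1
    have hβ2 : (0:ℝ) < β⁻¹ := inv_pos.mpr hβ
    have e6' : β⁻¹ * ⟪f' b, g⟫ - β⁻¹ * ⟪f' a, g⟫ = β⁻¹ * ‖g‖ ^ 2 := by
      rw [← mul_sub, e6]
    have e11 : β⁻¹ * ‖g‖ ^ 2 - β / 2 * (β⁻¹ ^ 2 * ‖g‖ ^ 2) = 1 / (2 * β) * ‖g‖ ^ 2 := by
      field_simp; ring
    linarith [h1, h2, e6', e11]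
  have hxy := half x y
  have hyx := half y x
  have e7 : ⟪f' x, y - x⟫ + ⟪f' y, x - y⟫ = -⟪f' x - f' y, x - y⟫ := by
    have : x - y = -(y - x) := by abel
    rw [inner_sub_left, this, inner_neg_right, inner_neg_right]
    ring
  have e8 : ‖f' x - f' y‖ = ‖f' y - f' x‖ := norm_sub_rev _ _
  have e8' : ‖f' x - f' y‖ ^ 2 = ‖f' y - f' x‖ ^ 2 := by rw [e8]
  have hS : 1 / (2 * β) * ‖f' y - f' x‖ ^ 2 + 1 / (2 * β) * ‖f' y - f' x‖ ^ 2 ≤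
      ⟪f' x - f' y, x - y⟫ := by rw [e8'] at hyx; linarith [hxy, hyx, e7]
  have hfin := mul_le_mul_of_nonneg_left hS hβ.le
  have e12 : β * (1 / (2 * β) * ‖f' y - f' x‖ ^ 2 + 1 / (2 * β) * ‖f' y - f' x‖ ^ 2) =
      ‖f' y - f' x‖ ^ 2 := by field_simp; ring
  rw [e12] at hfin
  rw [e8']
  exact hfin

private lemma pgd_proj_inner (Θ : Set (EuclideanSpace ℝ (Fin d)))
    (hconv : Convex ℝ Θ)
    (proj : EuclideanSpace ℝ (Fin d) → EuclideanSpace ℝ (Fin d))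
    (hmem : ∀ x, proj x ∈ Θ)
    (hmin : ∀ x, ∀ z ∈ Θ, ‖x - proj x‖ ≤ ‖x - z‖)
    (x z : EuclideanSpace ℝ (Fin d)) (hz : z ∈ Θ) :
    ⟪x - proj x, z - proj x⟫ ≤ 0 := by
  have hiInf : ‖x - proj x‖ = ⨅ w : Θ, ‖x - (w : EuclideanSpace ℝ (Fin d))‖ := by
    have hne : Nonempty Θ := ⟨⟨proj x, hmem x⟩⟩
    apply le_antisymm
    · exact le_ciInf fun w => hmin x w w.2
    · have hbdd : BddBelow (Set.range fun w : Θ => ‖x - (w : EuclideanSpace ℝ (Fin d))‖) := by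
        refine ⟨0, ?_⟩
        rintro r ⟨w, rfl⟩
        exact norm_nonneg _
      exact ciInf_le hbdd ⟨proj x, hmem x⟩
  exact (norm_eq_iInf_iff_real_inner_le_zero hconv (hmem x)).1 hiInf z hz

end AuxPGD

/-- The projected gradient descent step for an `α`-strongly convex, `β`-smooth
function, with projection onto a nonempty closed convex set `Θ`, is
`γ`-contractive with `γ = √(1 − 2αη + αβη²)`. -/
theorem projected_gd_step_contractive
    {d : ℕ} (f : EuclideanSpace ℝ (Fin d) → ℝ)
    (f' : EuclideanSpace ℝ (Fin d) → EuclideanSpace ℝ (Fin d))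
    (hgrad : ∀ θ, HasGradientAt f (f' θ) θ)
    (α β η : ℝ) (hα : 0 < α) (hαβ : α ≤ β)
    (hsc : ∀ θ θ' : EuclideanSpace ℝ (Fin d),
      α / 2 * ‖θ - θ'‖ ^ 2 ≤ f θ - f θ' - ⟪f' θ', θ - θ'⟫)
    (hsm : ∀ θ θ' : EuclideanSpace ℝ (Fin d), ‖f' θ - f' θ'‖ ≤ β * ‖θ - θ'‖)
    (hη0 : 0 < η) (hη2 : η < 2 / β)
    (Θ : Set (EuclideanSpace ℝ (Fin d)))
    (hne : Θ.Nonempty) (hclosed : IsClosed Θ) (hconv : Convex ℝ Θ)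
    (proj : EuclideanSpace ℝ (Fin d) → EuclideanSpace ℝ (Fin d))
    (hmem : ∀ x, proj x ∈ Θ)
    (hmin : ∀ x, ∀ z ∈ Θ, ‖x - proj x‖ ≤ ‖x - z‖) :
    ∀ θ θ' : EuclideanSpace ℝ (Fin d),
      ‖proj (θ - η • f' θ) - proj (θ' - η • f' θ')‖ ≤
        Real.sqrt (1 - 2 * α * η + α * β * η ^ 2) * ‖θ - θ'‖ := by
  intro θ θ'
  have hβ : 0 < β := lt_of_lt_of_le hα hαβ
  have hηβ : η * β < 2 := by
    rw [lt_div_iff₀ hβ] at hη2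
    linarith
  have hcvx : ∀ a b : EuclideanSpace ℝ (Fin d), 0 ≤ f a - f b - ⟪f' b, a - b⟫ := by
    intro a b
    have := hsc a b
    nlinarith [sq_nonneg ‖a - b‖]
  have hdesc := pgd_descent f f' hgrad β hβ.le hsm
  set u := θ - η • f' θ with hu
  set u' := θ' - η • f' θ' with hu'
  set p := proj u with hp
  set p' := proj u' with hp'
  -- projection is nonexpansive
  have hvar1 : ⟪u - p, p' - p⟫ ≤ 0 :=
    pgd_proj_inner Θ hconv proj hmem hmin u p' (hmem u')
  have hvar2 : ⟪u' - p', p - p'⟫ ≤ 0 :=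
    pgd_proj_inner Θ hconv proj hmem hmin u' p (hmem u)
  have hexp : ⟪u - u', p - p'⟫ = ⟪u - p, p - p'⟫ - ⟪u' - p', p - p'⟫ + ‖p - p'‖ ^ 2 := by
    have : u - u' = (u - p) - (u' - p') + (p - p') := by abel
    rw [this, inner_add_left, inner_sub_left, real_inner_self_eq_norm_sq]
  have hvar1' : 0 ≤ ⟪u - p, p - p'⟫ := by
    have : p - p' = -(p' - p) := by abel
    rw [this, inner_neg_right]
    linarith
  have hpnorm : ‖p - p'‖ ^ 2 ≤ ⟪u - u', p - p'⟫ := by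
    rw [hexp]; linarith
  have hcs : ⟪u - u', p - p'⟫ ≤ ‖u - u'‖ * ‖p - p'‖ := real_inner_le_norm _ _
  have hnonexp : ‖p - p'‖ ≤ ‖u - u'‖ := by
    rcases eq_or_lt_of_le (norm_nonneg (p - p')) with h | h
    · rw [← h]; exact norm_nonneg _
    · have : ‖p - p'‖ * ‖p - p'‖ ≤ ‖u - u'‖ * ‖p - p'‖ := by nlinarith
      exact le_of_mul_le_mul_right this h
  -- step contraction
  set Δ := θ - θ' with hΔ
  set g := f' θ - f' θ' with hgdef
  have hco : ‖g‖ ^ 2 ≤ β * ⟪g, Δ⟫ := pgd_cocoercive f f' β hβ hcvx hdesc θ θ'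
  have hs : α * ‖Δ‖ ^ 2 ≤ ⟪g, Δ⟫ := by
    have h1 := hsc θ θ'
    have h2 := hsc θ' θ
    have e1 : ‖θ' - θ‖ = ‖Δ‖ := by rw [hΔ]; exact norm_sub_rev _ _
    have e2 : ⟪f' θ, θ' - θ⟫ = -⟪f' θ, Δ⟫ := by
      have : θ' - θ = -Δ := by rw [hΔ]; abel
      rw [this, inner_neg_right]
    have e3 : ⟪g, Δ⟫ = ⟪f' θ, Δ⟫ - ⟪f' θ', Δ⟫ := by rw [hgdef, inner_sub_left]
    rw [e1] at h2
    rw [e2] at h2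
    linarith
  have hstep : ‖u - u'‖ ^ 2 ≤ (1 - 2 * α * η + α * β * η ^ 2) * ‖Δ‖ ^ 2 := by
    have hdiff : u - u' = Δ - η • g := by
      rw [hu, hu', hΔ, hgdef, smul_sub]; abel
    have hexp2 : ‖u - u'‖ ^ 2 = ‖Δ‖ ^ 2 - 2 * (η * ⟪g, Δ⟫) + η ^ 2 * ‖g‖ ^ 2 := by
      rw [hdiff, norm_sub_sq_real, real_inner_smul_right, real_inner_comm Δ g, norm_smul,
        mul_pow, Real.norm_eq_abs, sq_abs]
    have h1 : η ^ 2 * ‖g‖ ^ 2 ≤ η ^ 2 * (β * ⟪g, Δ⟫) :=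
      mul_le_mul_of_nonneg_left hco (sq_nonneg η)
    have h2 : η * (2 - η * β) * (α * ‖Δ‖ ^ 2) ≤ η * (2 - η * β) * ⟪g, Δ⟫ :=
      mul_le_mul_of_nonneg_left hs (by nlinarith)
    rw [hexp2]
    nlinarith [h1, h2]
  have hc : 0 ≤ 1 - 2 * α * η + α * β * η ^ 2 := by
    nlinarith [mul_nonneg hα.le (sq_nonneg (β * η - 1)), hβ, hαβ]
  calc ‖p - p'‖ ≤ ‖u - u'‖ := hnonexp
    _ = Real.sqrt (‖u - u'‖ ^ 2) := (Real.sqrt_sq (norm_nonneg _)).symm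
    _ ≤ Real.sqrt ((1 - 2 * α * η + α * β * η ^ 2) * ‖Δ‖ ^ 2) := Real.sqrt_le_sqrt hstep
    _ = Real.sqrt (1 - 2 * α * η + α * β * η ^ 2) * ‖Δ‖ := by
        rw [Real.sqrt_mul hc, Real.sqrt_sq (norm_nonneg _)]
end

section
/- Let f : ℝ^d → ℝ be convex, differentiable, and β-smooth (β > 0). Then for all θ, θ' ∈ ℝ^d, ⟨∇f(θ) − ∇f(θ'), θ − θ'⟩ ≥ (1/β)‖∇f(θ) − ∇f(θ')‖² (co-coercivity of the gradient). -/
open scoped RealInnerProductSpace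

section Aux

variable {d : ℕ}

private lemma hasDerivAt_line (f : EuclideanSpace ℝ (Fin d) → ℝ)
    (g : EuclideanSpace ℝ (Fin d) → EuclideanSpace ℝ (Fin d))
    (hgrad : ∀ θ, HasGradientAt f (g θ) θ)
    (x v : EuclideanSpace ℝ (Fin d)) (t : ℝ) :
    HasDerivAt (fun s : ℝ => f (x + s • v)) ⟪g (x + t • v), v⟫ t := by
  have h1 : HasDerivAt (fun s : ℝ => x + s • v) v t := by
    simpa using ((hasDerivAt_id t).smul_const v).const_add x
  have h2 : HasFDerivAt f (InnerProductSpace.toDual ℝ _ (g (x + t • v))) (x + t • v) :=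
    (hgrad (x + t • v))
  have h3 := h2.comp_hasDerivAt t h1
  simp only [InnerProductSpace.toDual_apply_apply] at h3
  exact h3

/-- Gradient inequality for convex functions. -/
private lemma grad_ineq (f : EuclideanSpace ℝ (Fin d) → ℝ)
    (g : EuclideanSpace ℝ (Fin d) → EuclideanSpace ℝ (Fin d))
    (hgrad : ∀ θ, HasGradientAt f (g θ) θ)
    (hconv : ConvexOn ℝ Set.univ f)
    (x y : EuclideanSpace ℝ (Fin d)) :
    f x + ⟪g x, y - x⟫ ≤ f y := by
  set v := y - x with hv
  have hφconv : ConvexOn ℝ (Set.univ : Set ℝ) (fun s : ℝ => f (x + s • v)) := by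
    refine ⟨convex_univ, ?_⟩
    intro s _ t _ a b ha hb hab
    have key : x + (a * s + b * t) • v = a • (x + s • v) + b • (x + t • v) := by
      have h1 : a • (x + s • v) + b • (x + t • v)
          = (a + b) • x + (a * s + b * t) • v := by module
      rw [h1, hab, one_smul]
    show f (x + (a * s + b * t) • v) ≤ a * f (x + s • v) + b * f (x + t • v)
    rw [key]
    simpa using hconv.2 (Set.mem_univ (x + s • v)) (Set.mem_univ (x + t • v)) ha hb hab
  have hd := hasDerivAt_line f g hgrad x v 0
  have h0 : x + (0:ℝ) • v = x := by rw [zero_smul, add_zero]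
  rw [h0] at hd
  have hle := hφconv.le_slope_of_hasDerivAt (Set.mem_univ (0:ℝ)) (Set.mem_univ (1:ℝ))
    one_pos hd
  have h1 : x + (1:ℝ) • v = y := by rw [one_smul, hv]; abel
  have hsl : slope (fun s : ℝ => f (x + s • v)) 0 1 = f y - f x := by
    rw [slope_def_field]
    rw [h1, h0]
    simp
  rw [hsl] at hle
  linarith

/-- Descent lemma. -/
private lemma descent (f : EuclideanSpace ℝ (Fin d) → ℝ)
    (g : EuclideanSpace ℝ (Fin d) → EuclideanSpace ℝ (Fin d))
    (hgrad : ∀ θ, HasGradientAt f (g θ) θ)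
    (β : ℝ) (hβ : 0 < β)
    (hsm : ∀ θ θ' : EuclideanSpace ℝ (Fin d), ‖g θ - g θ'‖ ≤ β * ‖θ - θ'‖)
    (x y : EuclideanSpace ℝ (Fin d)) :
    f y ≤ f x + ⟪g x, y - x⟫ + β / 2 * ‖y - x‖ ^ 2 := by
  set v := y - x with hv
  set ψ : ℝ → ℝ := fun t => f (x + t • v) - t * ⟪g x, v⟫ - β / 2 * t ^ 2 * ‖v‖ ^ 2 with hψ
  have hψd : ∀ t : ℝ, HasDerivAt ψ (⟪g (x + t • v) - g x, v⟫ - β * t * ‖v‖ ^ 2) t := by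
    intro t
    have h1 := hasDerivAt_line f g hgrad x v t
    have h2 : HasDerivAt (fun t : ℝ => t * ⟪g x, v⟫) ⟪g x, v⟫ t := by
      simpa using (hasDerivAt_id t).mul_const ⟪g x, v⟫
    have h3 : HasDerivAt (fun t : ℝ => β / 2 * t ^ 2 * ‖v‖ ^ 2)
        (β / 2 * (↑2 * t ^ 1) * ‖v‖ ^ 2) t :=
      ((hasDerivAt_pow 2 t).const_mul (β / 2)).mul_const (‖v‖ ^ 2)
    have h4 : HasDerivAt ψ (⟪g (x + t • v), v⟫ - ⟪g x, v⟫ - β / 2 * (↑2 * t ^ 1) * ‖v‖ ^ 2) t :=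
      (h1.sub h2).sub h3
    convert h4 using 1
    rw [inner_sub_left]
    push_cast
    ring
  have hanti : AntitoneOn ψ (Set.Icc (0:ℝ) 1) := by
    apply antitoneOn_of_deriv_nonpos (convex_Icc 0 1)
    · exact fun t _ => (hψd t).continuousAt.continuousWithinAt
    · exact fun t _ => (hψd t).differentiableAt.differentiableWithinAt
    · intro t ht
      rw [interior_Icc] at ht
      rw [(hψd t).deriv]
      have hCS : ⟪g (x + t • v) - g x, v⟫ ≤ ‖g (x + t • v) - g x‖ * ‖v‖ :=
        real_inner_le_norm _ _
      have hlip : ‖g (x + t • v) - g x‖ ≤ β * (t * ‖v‖) := by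
        have := hsm (x + t • v) x
        simpa [norm_smul, abs_of_nonneg ht.1.le, mul_assoc] using this
      have h0 : ‖g (x + t • v) - g x‖ * ‖v‖ ≤ β * t * ‖v‖ ^ 2 := by
        have := mul_le_mul_of_nonneg_right hlip (norm_nonneg v)
        calc ‖g (x + t • v) - g x‖ * ‖v‖ ≤ β * (t * ‖v‖) * ‖v‖ := this
          _ = β * t * ‖v‖ ^ 2 := by ring
      linarith
  have := hanti (Set.mem_Icc.mpr ⟨le_refl 0, zero_le_one⟩)
    (Set.mem_Icc.mpr ⟨zero_le_one, le_refl 1⟩) zero_le_one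
  simp only [hψ, zero_smul, add_zero, one_smul, zero_mul, pow_two, mul_zero, mul_one,
    sub_zero, one_pow] at this
  have hxy : x + v = y := by rw [hv]; abel
  rw [hxy] at this
  linarith

/-- Strengthened gradient inequality. -/
private lemma strong_ineq (f : EuclideanSpace ℝ (Fin d) → ℝ)
    (g : EuclideanSpace ℝ (Fin d) → EuclideanSpace ℝ (Fin d))
    (hgrad : ∀ θ, HasGradientAt f (g θ) θ)
    (hconv : ConvexOn ℝ Set.univ f)
    (β : ℝ) (hβ : 0 < β)
    (hsm : ∀ θ θ' : EuclideanSpace ℝ (Fin d), ‖g θ - g θ'‖ ≤ β * ‖θ - θ'‖)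
    (x y : EuclideanSpace ℝ (Fin d)) :
    f x + ⟪g x, y - x⟫ + 1 / (2 * β) * ‖g y - g x‖ ^ 2 ≤ f y := by
  set u := g y - g x with hu
  set z := y - (1 / β) • u with hz
  have h1 := grad_ineq f g hgrad hconv x z
  have h2 := descent f g hgrad β hβ hsm y z
  have hzy : z - y = -((1 / β) • u) := by rw [hz]; abel
  have hnorm : ‖z - y‖ ^ 2 = (1 / β) ^ 2 * ‖u‖ ^ 2 := by
    rw [hzy, norm_neg, norm_smul, mul_pow]
    congr 1
    rw [Real.norm_eq_abs, abs_of_nonneg (by positivity : (0:ℝ) ≤ 1 / β)]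
  have hzx : z - x = (y - x) - (1 / β) • u := by rw [hz]; abel
  have hinner1 : ⟪g x, z - x⟫ = ⟪g x, y - x⟫ - (1 / β) * ⟪g x, u⟫ := by
    rw [hzx, inner_sub_right, real_inner_smul_right]
  have hinner2 : ⟪g y, z - y⟫ = -(1 / β) * ⟪g y, u⟫ := by
    rw [hzy, inner_neg_right, real_inner_smul_right]; ring
  have hdiff : ⟪g y, u⟫ - ⟪g x, u⟫ = ‖u‖ ^ 2 := by
    rw [← inner_sub_left, ← hu, real_inner_self_eq_norm_sq]
  rw [hinner1] at h1
  rw [hinner2, hnorm] at h2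
  have hβ2 : β / 2 * ((1 / β) ^ 2 * ‖u‖ ^ 2) = 1 / (2 * β) * ‖u‖ ^ 2 := by
    field_simp
  rw [hβ2] at h2
  have hd2 : 1 / β * (⟪g y, u⟫ - ⟪g x, u⟫) = 1 / β * ‖u‖ ^ 2 := by rw [hdiff]
  have hb3 : 1 / β * ‖u‖ ^ 2 - 1 / (2 * β) * ‖u‖ ^ 2 = 1 / (2 * β) * ‖u‖ ^ 2 := by
    field_simp; ring
  have hd3 : 1 / β * ⟪g y, u⟫ - 1 / β * ⟪g x, u⟫ = 1 / β * ‖u‖ ^ 2 := by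
    rw [← mul_sub, hdiff]
  linarith [h1, h2, hd3, hb3]
  
end Aux

/-- Co-coercivity of the gradient of a convex `β`-smooth function:
`⟨∇f(θ) − ∇f(θ'), θ − θ'⟩ ≥ (1/β)‖∇f(θ) − ∇f(θ')‖²`. -/
theorem gradient_cocoercive
    {d : ℕ} (f : EuclideanSpace ℝ (Fin d) → ℝ)
    (f' : EuclideanSpace ℝ (Fin d) → EuclideanSpace ℝ (Fin d))
    (hgrad : ∀ θ, HasGradientAt f (f' θ) θ)
    (hconv : ConvexOn ℝ Set.univ f)
    (β : ℝ) (hβ : 0 < β)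
    (hsm : ∀ θ θ' : EuclideanSpace ℝ (Fin d), ‖f' θ - f' θ'‖ ≤ β * ‖θ - θ'‖) :
    ∀ θ θ' : EuclideanSpace ℝ (Fin d),
      (1 / β) * ‖f' θ - f' θ'‖ ^ 2 ≤ ⟪f' θ - f' θ', θ - θ'⟫ := by
  intro x y
  have h1 := strong_ineq f f' hgrad hconv β hβ hsm x y
  have h2 := strong_ineq f f' hgrad hconv β hβ hsm y x
  have hsym : ‖f' x - f' y‖ = ‖f' y - f' x‖ := norm_sub_rev _ _
  have hi : ⟪f' x - f' y, x - y⟫ = -⟪f' x, y - x⟫ - ⟪f' y, x - y⟫ := by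
    rw [inner_sub_left]
    have : (y : EuclideanSpace ℝ (Fin d)) - x = -(x - y) := by abel
    rw [this, inner_neg_right]
    ring
  rw [hi, hsym]
  have : (1 : ℝ) / β = 1 / (2 * β) + 1 / (2 * β) := by field_simp; ring
  rw [this]
  rw [hsym] at h2
  linarith [h1, h2]
end

section
/- Let z_1,…,z_n be i.i.d. samples from μ on Z, let f : Θ × Z → ℝ satisfy the bounded deviation condition |sup_z f(θ;z) − inf_z f(θ;z)| ≤ B for all θ, and let φ : Z^n → Θ be a deterministic map depending only on coordinates in a fixed index set I ⊆ [n] with |I| ≤ T < n. Set θ̂ := φ(z_1,…,z_n), F(θ) := E[f(θ;Z)], F̂(θ) := (1/n)∑_i f(θ;z_i). Then with probability at least 1 − δ, |F̂(θ̂) − F(θ̂)| ≤ BT/n + B√(log(2/δ)/(2n)). -/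
open MeasureTheory

open Real ProbabilityTheory

lemma hoeff_key {p : ℝ} (hp0 : 0 ≤ p) (hp1 : p ≤ 1) (h : ℝ) :
    (1 - p) * exp (-p * h) + p * exp ((1 - p) * h) ≤ exp (h ^ 2 / 8) := by
  set u : ℝ → ℝ := fun x => 1 - p + p * exp x with hu
  have hupos : ∀ x, 0 < u x := by
    intro x
    rcases lt_or_eq_of_le hp1 with hp | hp
    · have h1 : 0 < 1 - p := by linarith
      have h2 : 0 ≤ p * exp x := mul_nonneg hp0 (exp_pos x).le
      simp only [hu]; linarith
    · have : u x = exp x := by simp [hu, hp]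
      rw [this]; exact exp_pos x
  -- derivative of g x := x/4 + p - p * exp x / u x   is   1/4 - p*exp x*(1-p)/(u x)^2 ≥ 0
  set g : ℝ → ℝ := fun x => x / 4 + p - p * exp x / u x with hg
  have hderiv : ∀ x, HasDerivAt g (1 / 4 - p * exp x * (1 - p) / (u x) ^ 2) x := by
    intro x
    have h1 : HasDerivAt (fun x => p * exp x) (p * exp x) x := (hasDerivAt_exp x).const_mul p
    have h2 : HasDerivAt u (p * exp x) x := by
      exact h1.const_add (1 - p)
    have h3 : HasDerivAt (fun x => p * exp x / u x)
        ((p * exp x * u x - p * exp x * (p * exp x)) / (u x) ^ 2) x :=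
      h1.div h2 (hupos x).ne'
    have h4 : HasDerivAt (fun x => x / 4 + p) (1 / 4) x := by
      simpa using ((hasDerivAt_id x).div_const 4).add_const p
    have := h4.sub h3
    refine this.congr_deriv ?_
    have : u x = 1 - p + p * exp x := rfl
    rw [this]
    ring
  have hd_nonneg : ∀ x, 0 ≤ 1 / 4 - p * exp x * (1 - p) / (u x) ^ 2 := by
    intro x
    rw [sub_nonneg, div_le_iff₀ (pow_pos (hupos x) 2)]
    have hux : u x = 1 - p + p * exp x := rfl
    rw [hux]
    nlinarith [sq_nonneg (1 - p - p * exp x), exp_pos x, mul_nonneg hp0 (exp_pos x).le]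
  have hgmono : Monotone g := by
    have hdiff : Differentiable ℝ g := fun x => (hderiv x).differentiableAt
    refine monotone_of_deriv_nonneg hdiff ?_
    intro x
    rw [(hderiv x).deriv]
    exact hd_nonneg x
  have hu0 : u 0 = 1 := by simp [hu]
  have hg0 : g 0 = 0 := by
    show (0:ℝ) / 4 + p - p * exp 0 / u 0 = 0
    rw [hu0]; simp
  -- D x := x^2/8 - (-p*x + log (u x)), D' = g
  set D : ℝ → ℝ := fun x => x ^ 2 / 8 - (-p * x + log (u x)) with hD
  have hDderiv : ∀ x, HasDerivAt D (g x) x := by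
    intro x
    have h1 : HasDerivAt (fun x => p * exp x) (p * exp x) x := (hasDerivAt_exp x).const_mul p
    have h2 : HasDerivAt u (p * exp x) x := by exact h1.const_add (1 - p)
    have h3 : HasDerivAt (fun x => log (u x)) (p * exp x / u x) x := h2.log (hupos x).ne'
    have h4 : HasDerivAt (fun x => -p * x) (-p) x := by simpa using (hasDerivAt_id x).const_mul (-p)
    have h5 : HasDerivAt (fun x => x ^ 2 / 8) (x / 4) x := by
      have := ((hasDerivAt_pow 2 x).div_const 8)
      refine this.congr_deriv ?_
      ring
    have := h5.sub (h4.add h3)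
    refine this.congr_deriv ?_
    simp only [hg]
    ring
  have hD0 : D 0 = 0 := by
    show (0:ℝ) ^ 2 / 8 - (-p * 0 + log (u 0)) = 0
    rw [hu0]; simp
  have hDnonneg : ∀ x, 0 ≤ D x := by
    intro x
    rcases le_or_gt 0 x with hx | hx
    · have : MonotoneOn D (Set.Ici 0) := by
        refine monotoneOn_of_deriv_nonneg (convex_Ici 0) ?_ ?_ ?_
        · exact Continuous.continuousOn (by
            have : ∀ y, DifferentiableAt ℝ D y := fun y => (hDderiv y).differentiableAt
            exact (Differentiable.continuous this))
        · intro y _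
          exact ((hDderiv y).differentiableAt).differentiableWithinAt
        · intro y hy
          rw [interior_Ici] at hy
          rw [(hDderiv y).deriv]
          linarith [hgmono (le_of_lt hy : (0:ℝ) ≤ y), hg0]
      have := this (Set.self_mem_Ici) (by exact hx) hx
      rwa [hD0] at this
    · have : AntitoneOn D (Set.Iic 0) := by
        refine antitoneOn_of_deriv_nonpos (convex_Iic 0) ?_ ?_ ?_
        · exact Continuous.continuousOn (by
            have : ∀ y, DifferentiableAt ℝ D y := fun y => (hDderiv y).differentiableAt
            exact (Differentiable.continuous this))
        · intro y _
          exact ((hDderiv y).differentiableAt).differentiableWithinAt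
        · intro y hy
          rw [interior_Iic] at hy
          rw [(hDderiv y).deriv]
          linarith [hgmono (le_of_lt hy : y ≤ (0:ℝ)), hg0]
      have := this hx.le (Set.self_mem_Iic) hx.le
      rwa [hD0] at this
  -- conclude
  have key : -p * h + log (u h) ≤ h ^ 2 / 8 := by
    have := hDnonneg h
    simp only [hD] at this
    linarith
  have hLHS : (1 - p) * exp (-p * h) + p * exp ((1 - p) * h) = exp (-p * h + log (u h)) := by
    rw [exp_add, exp_log (hupos h)]
    have : (1 - p) * h = -p * h + h := by ring
    rw [this, exp_add]
    simp only [hu]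
    ring
  rw [hLHS]
  exact exp_le_exp.mpr key

lemma integrable_of_abs_le {Z : Type*} [MeasurableSpace Z] {ν : Measure Z}
    [IsFiniteMeasure ν] {g : Z → ℝ} (hg : Measurable g) {C : ℝ} (h : ∀ z, |g z| ≤ C) :
    Integrable g ν :=
  (integrable_const C).mono' hg.aestronglyMeasurable (ae_of_all _ fun z => by
    simpa using h z)

lemma hoeffding_lemma {Z : Type*} [MeasurableSpace Z] (ν : Measure Z) [IsProbabilityMeasure ν]
    {g : Z → ℝ} (hg : Measurable g) {a B : ℝ} (hB : 0 ≤ B) (t : ℝ)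
    (hlb : ∀ z, a ≤ g z) (hub : ∀ z, g z ≤ a + B) :
    ∫ z, exp (t * (g z - ∫ z', g z' ∂ν)) ∂ν ≤ exp (t ^ 2 * B ^ 2 / 8) := by
  set m := ∫ z', g z' ∂ν with hm
  have hgabs : ∀ z, |g z| ≤ |a| + B := fun z =>
    abs_le.mpr ⟨by linarith [hlb z, neg_abs_le a], by linarith [hub z, le_abs_self a]⟩
  have hgint : Integrable g ν := integrable_of_abs_le hg hgabs
  have hma : a ≤ m := by
    have : ∫ _ : Z, a ∂ν ≤ m := integral_mono (integrable_const a) hgint hlb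
    simpa using this
  have hmb : m ≤ a + B := by
    have : m ≤ ∫ _ : Z, (a + B) ∂ν := integral_mono hgint (integrable_const (a + B)) hub
    simpa using this
  rcases eq_or_lt_of_le hB with hB0 | hBpos
  · -- B = 0 : g ≡ a
    have hga : ∀ z, g z = a := fun z => le_antisymm (by linarith [hub z]) (hlb z)
    have hm' : m = a := by rw [hm]; simp only [hga]; simp
    have : (fun z => exp (t * (g z - m))) = fun _ : Z => 1 := by
      funext z; rw [hga z, hm']; simp
    rw [this]
    simp only [integral_const, measure_univ, ENNReal.toReal_one, probReal_univ, one_smul, smul_eq_mul]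
    have h1e : (1:ℝ) ≤ exp (t ^ 2 * B ^ 2 / 8) := one_le_exp (by positivity)
    linarith
  · -- B > 0
    set α := a - m with hα
    set β := a + B - m with hβ
    have hα0 : α ≤ 0 := by simp only [hα]; linarith
    have hβ0 : 0 ≤ β := by simp only [hβ]; linarith
    set p := -α / B with hp
    have hp0 : 0 ≤ p := by apply div_nonneg; linarith; linarith
    have hp1 : p ≤ 1 := by rw [hp, div_le_one hBpos]; simp only [hα]; linarith
    -- pointwise convexity bound
    have hconv : ∀ z, exp (t * (g z - m)) ≤
        ((β - (g z - m)) / B) * exp (t * α) + (((g z - m) - α) / B) * exp (t * β) := by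
      intro z
      set x := g z - m with hx
      have hxα : α ≤ x := by simp only [hα, hx]; linarith [hlb z]
      have hxβ : x ≤ β := by simp only [hβ, hx]; linarith [hub z]
      have hw1 : 0 ≤ (β - x) / B := by apply div_nonneg; linarith; linarith
      have hw2 : 0 ≤ (x - α) / B := by apply div_nonneg; linarith; linarith
      have hsum : (β - x) / B + (x - α) / B = 1 := by
        field_simp
        simp only [hβ, hα]; ring
      have := convexOn_exp.2 (Set.mem_univ (t * α)) (Set.mem_univ (t * β)) hw1 hw2 hsum
      simp only [smul_eq_mul] at this
      have harg : (β - x) / B * (t * α) + (x - α) / B * (t * β) = t * x := by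
        have hBα : β - α = B := by simp only [hβ, hα]; ring
        field_simp
        linear_combination t * x * hBα
      rwa [harg] at this
    have hGint : Integrable (fun z => g z - m) ν := hgint.sub (integrable_const m)
    -- integrate
    have hint1 : Integrable (fun z => exp (t * (g z - m))) ν := by
      apply integrable_of_abs_le (by fun_prop) (C := exp (|t| * B))
      intro z
      rw [abs_of_pos (exp_pos _), exp_le_exp]
      have h1 : |g z - m| ≤ B := abs_le.mpr ⟨by linarith [hlb z], by linarith [hub z]⟩
      calc t * (g z - m) ≤ |t * (g z - m)| := le_abs_self _
        _ = |t| * |g z - m| := abs_mul _ _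
        _ ≤ |t| * B := by apply mul_le_mul_of_nonneg_left h1 (abs_nonneg t)
    have hint2 : Integrable (fun z => ((β - (g z - m)) / B) * exp (t * α) +
        (((g z - m) - α) / B) * exp (t * β)) ν := by
      apply Integrable.add
      · exact (((integrable_const β).sub hGint).div_const B).mul_const _
      · exact ((hGint.sub (integrable_const α)).div_const B).mul_const _
    have hIm : ∫ z, (g z - m) ∂ν = 0 := by
      rw [integral_sub hgint (integrable_const m)]
      simp [hm]
    have h2 : ∫ z, (((β - (g z - m)) / B) * exp (t * α) +
        (((g z - m) - α) / B) * exp (t * β)) ∂ν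
        = (β / B) * exp (t * α) + (-α / B) * exp (t * β) := by
      have i1 : Integrable (fun z => (β - (g z - m)) / B * exp (t * α)) ν :=
        (((integrable_const β).sub hGint).div_const B).mul_const _
      have i2 : Integrable (fun z => ((g z - m) - α) / B * exp (t * β)) ν :=
        ((hGint.sub (integrable_const α)).div_const B).mul_const _
      rw [integral_add i1 i2]
      rw [integral_mul_const, integral_mul_const, integral_div, integral_div]
      have e1 : ∫ z, (β - (g z - m)) ∂ν = β := by
        rw [integral_sub (integrable_const β) hGint, hIm]
        simp
      have e2 : ∫ z, ((g z - m) - α) ∂ν = -α := by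
        rw [integral_sub hGint (integrable_const α), hIm]
        simp
      rw [e1, e2]
    have step1 : ∫ z, exp (t * (g z - m)) ∂ν ≤ (β / B) * exp (t * α) + (-α / B) * exp (t * β) := by
      rw [← h2]
      exact integral_mono hint1 hint2 hconv
    -- rewrite in terms of p, h
    set hh := t * B with hhh
    have hαp : t * α = -p * hh := by
      rw [hp, hhh]; field_simp
    have hβp : t * β = (1 - p) * hh := by
      have : β = B + α := by simp only [hβ, hα]; ring
      rw [this, hp, hhh]; field_simp; ring
    have hβB : β / B = 1 - p := by
      have : β = B + α := by simp only [hβ, hα]; ring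
      rw [this, hp]; field_simp
      ring
    have final : (β / B) * exp (t * α) + (-α / B) * exp (t * β) ≤ exp (hh ^ 2 / 8) := by
      rw [hαp, hβp, hβB, ← hp]
      exact hoeff_key hp0 hp1 hh
    have : hh ^ 2 / 8 = t ^ 2 * B ^ 2 / 8 := by rw [hhh]; ring
    rw [this] at final
    exact step1.trans final

lemma hoeffding_tail_one {Z : Type*} [MeasurableSpace Z] (ν : Measure Z) [IsProbabilityMeasure ν]
    (ι : Type*) [Fintype ι] {g : Z → ℝ} (hg : Measurable g) {a B : ℝ} (hB : 0 < B)
    {s : ℝ} (hs : 0 ≤ s) (hcard : 0 < Fintype.card ι)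
    (hlb : ∀ z, a ≤ g z) (hub : ∀ z, g z ≤ a + B) :
    (Measure.pi fun _ : ι => ν) {y | s ≤ ∑ i, (g (y i) - ∫ z, g z ∂ν)} ≤
      ENNReal.ofReal (Real.exp (-2 * s ^ 2 / (Fintype.card ι * B ^ 2))) := by
  set m₀ := ∫ z, g z ∂ν with hm₀
  set c : ℝ := (Fintype.card ι : ℝ) with hc
  have hcpos : 0 < c := by rw [hc]; exact_mod_cast hcard
  set lam : ℝ := 4 * s / (c * B ^ 2) with hlam
  have hlam0 : 0 ≤ lam := by positivity
  set X : (ι → Z) → ℝ := fun y => ∑ i, (g (y i) - m₀) with hX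
  have hgm : ∀ z, |g z - m₀| ≤ B := by
    intro z
    have h1 : a ≤ m₀ := by
      have : ∫ _ : Z, a ∂ν ≤ m₀ := integral_mono (integrable_const a)
        (integrable_of_abs_le hg (C := |a| + B) (fun z => abs_le.mpr
          ⟨by linarith [hlb z, neg_abs_le a], by linarith [hub z, le_abs_self a]⟩)) hlb
      simpa using this
    have h2 : m₀ ≤ a + B := by
      have : m₀ ≤ ∫ _ : Z, (a + B) ∂ν := integral_mono
        (integrable_of_abs_le hg (C := |a| + B) (fun z => abs_le.mpr
          ⟨by linarith [hlb z, neg_abs_le a], by linarith [hub z, le_abs_self a]⟩))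
        (integrable_const (a + B)) hub
      simpa using this
    exact abs_le.mpr ⟨by linarith [hlb z], by linarith [hub z]⟩
  have hXmeas : Measurable X := by
    apply Finset.measurable_sum
    intro i _
    exact (hg.comp (measurable_pi_apply i)).sub measurable_const
  have hXabs : ∀ y, |X y| ≤ c * B := by
    intro y
    calc |X y| ≤ ∑ i, |g (y i) - m₀| := Finset.abs_sum_le_sum_abs _ _
      _ ≤ ∑ _i : ι, B := Finset.sum_le_sum fun i _ => hgm (y i)
      _ = c * B := by rw [Finset.sum_const]; simp [hc, mul_comm]
  have h_int : Integrable (fun y => exp (lam * X y)) (Measure.pi fun _ : ι => ν) := by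
    apply integrable_of_abs_le (by fun_prop) (C := exp (lam * (c * B)))
    intro y
    rw [abs_of_pos (exp_pos _), exp_le_exp]
    calc lam * X y ≤ |lam * X y| := le_abs_self _
      _ = lam * |X y| := by rw [abs_mul, abs_of_nonneg hlam0]
      _ ≤ lam * (c * B) := mul_le_mul_of_nonneg_left (hXabs y) hlam0
  have chern := measure_ge_le_exp_mul_mgf (X := X) (μ := Measure.pi fun _ : ι => ν)
    s hlam0 h_int
  -- compute mgf
  have hmgf : mgf X (Measure.pi fun _ : ι => ν) lam =
      ∏ _i : ι, ∫ z, exp (lam * (g z - m₀)) ∂ν := by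
    rw [mgf]
    have heq : ∀ y : ι → Z, exp (lam * X y) = ∏ i, exp (lam * (g (y i) - m₀)) := by
      intro y
      rw [hX, Finset.mul_sum, Real.exp_sum]
    calc (Measure.pi fun _ : ι => ν)[fun ω => exp (lam * X ω)]
        = ∫ y, ∏ i, exp (lam * (g (y i) - m₀)) ∂(Measure.pi fun _ : ι => ν) := by
          congr 1; funext y; exact heq y
      _ = ∏ _i : ι, ∫ z, exp (lam * (g z - m₀)) ∂ν := by
          letI : MeasureSpace Z := ⟨ν⟩
          haveI : SigmaFinite (volume : Measure Z) := by
            show SigmaFinite ν; infer_instance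
          exact MeasureTheory.integral_fintype_prod_eq_prod (ι := ι)
            (fun _ z => exp (lam * (g z - m₀)))
  have hfac : ∀ _i : ι, ∫ z, exp (lam * (g z - m₀)) ∂ν ≤ exp (lam ^ 2 * B ^ 2 / 8) :=
    fun _ => hoeffding_lemma ν hg hB.le lam hlb hub
  have hmgf_le : mgf X (Measure.pi fun _ : ι => ν) lam ≤ exp (c * (lam ^ 2 * B ^ 2 / 8)) := by
    rw [hmgf]
    calc ∏ _i : ι, ∫ z, exp (lam * (g z - m₀)) ∂ν
        ≤ ∏ _i : ι, exp (lam ^ 2 * B ^ 2 / 8) :=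
          Finset.prod_le_prod (fun i _ => integral_nonneg fun z => (exp_pos _).le)
            (fun i _ => hfac i)
      _ = exp (lam ^ 2 * B ^ 2 / 8) ^ (Fintype.card ι) := by
          rw [Finset.prod_const]; simp
      _ = exp (c * (lam ^ 2 * B ^ 2 / 8)) := by
          rw [hc, ← Real.exp_nat_mul]
  have harith : -lam * s + c * (lam ^ 2 * B ^ 2 / 8) = -2 * s ^ 2 / (c * B ^ 2) := by
    rw [hlam]
    field_simp
    ring
  have toReal_le : ((Measure.pi fun _ : ι => ν) {y | s ≤ X y}).toReal ≤
      exp (-2 * s ^ 2 / (c * B ^ 2)) := by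
    calc ((Measure.pi fun _ : ι => ν) {y | s ≤ X y}).toReal
        ≤ exp (-lam * s) * mgf X (Measure.pi fun _ : ι => ν) lam := chern
      _ ≤ exp (-lam * s) * exp (c * (lam ^ 2 * B ^ 2 / 8)) := by
          apply mul_le_mul_of_nonneg_left hmgf_le (exp_pos _).le
      _ = exp (-lam * s + c * (lam ^ 2 * B ^ 2 / 8)) := (Real.exp_add _ _).symm
      _ = exp (-2 * s ^ 2 / (c * B ^ 2)) := by rw [harith]
  calc (Measure.pi fun _ : ι => ν) {y | s ≤ X y}
      = ENNReal.ofReal (((Measure.pi fun _ : ι => ν) {y | s ≤ X y}).toReal) :=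
        (ENNReal.ofReal_toReal (measure_ne_top _ _)).symm
    _ ≤ ENNReal.ofReal (exp (-2 * s ^ 2 / (c * B ^ 2))) :=
        ENNReal.ofReal_le_ofReal toReal_le

lemma hoeffding_tail_two {Z : Type*} [MeasurableSpace Z] (ν : Measure Z) [IsProbabilityMeasure ν]
    (ι : Type*) [Fintype ι] {g : Z → ℝ} (hg : Measurable g) {a B : ℝ} (hB : 0 < B)
    {s : ℝ} (hs : 0 ≤ s) (hcard : 0 < Fintype.card ι)
    (hlb : ∀ z, a ≤ g z) (hub : ∀ z, g z ≤ a + B) :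
    (Measure.pi fun _ : ι => ν) {y | s ≤ |∑ i, (g (y i) - ∫ z, g z ∂ν)|} ≤
      ENNReal.ofReal (2 * Real.exp (-2 * s ^ 2 / (Fintype.card ι * B ^ 2))) := by
  set m₀ := ∫ z, g z ∂ν with hm₀
  have hsub : {y : ι → Z | s ≤ |∑ i, (g (y i) - m₀)|} ⊆
      {y : ι → Z | s ≤ ∑ i, (g (y i) - m₀)} ∪
      {y : ι → Z | s ≤ ∑ i, ((-g) (y i) - ∫ z, (-g) z ∂ν)} := by
    intro y hy
    simp only [Set.mem_setOf_eq] at hy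
    rcases le_abs.mp hy with h | h
    · exact Or.inl h
    · right
      show s ≤ ∑ i, ((-g) (y i) - ∫ z, (-g) z ∂ν)
      have : ∀ i : ι, (-g) (y i) - ∫ z, (-g) z ∂ν = -(g (y i) - m₀) := by
        intro i
        simp only [Pi.neg_apply, integral_neg, hm₀]
        ring
      rw [Finset.sum_congr rfl fun i _ => this i, Finset.sum_neg_distrib]
      exact h
  have h1 := hoeffding_tail_one ν ι hg hB hs hcard hlb hub
  have h2 := hoeffding_tail_one ν ι (g := -g) (a := -(a + B)) hg.neg hB hs hcard
    (fun z => by simp only [Pi.neg_apply]; linarith [hub z])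
    (fun z => by simp only [Pi.neg_apply]; linarith [hlb z])
  calc (Measure.pi fun _ : ι => ν) {y | s ≤ |∑ i, (g (y i) - m₀)|}
      ≤ (Measure.pi fun _ : ι => ν) ({y : ι → Z | s ≤ ∑ i, (g (y i) - m₀)} ∪
          {y : ι → Z | s ≤ ∑ i, ((-g) (y i) - ∫ z, (-g) z ∂ν)}) := measure_mono hsub
    _ ≤ (Measure.pi fun _ : ι => ν) {y : ι → Z | s ≤ ∑ i, (g (y i) - m₀)} +
        (Measure.pi fun _ : ι => ν) {y : ι → Z | s ≤ ∑ i, ((-g) (y i) - ∫ z, (-g) z ∂ν)} :=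
        measure_union_le _ _
    _ ≤ ENNReal.ofReal (Real.exp (-2 * s ^ 2 / (Fintype.card ι * B ^ 2))) +
        ENNReal.ofReal (Real.exp (-2 * s ^ 2 / (Fintype.card ι * B ^ 2))) :=
        add_le_add h1 h2
    _ = ENNReal.ofReal (2 * Real.exp (-2 * s ^ 2 / (Fintype.card ι * B ^ 2))) := by
        rw [← ENNReal.ofReal_add (exp_pos _).le (exp_pos _).le]
        congr 1
        ring

/-- Concentration for a deterministic algorithm depending on at most `T` of the
`n` samples: with probability at least `1 − δ`,
`|F̂(θ̂) − F(θ̂)| ≤ BT/n + B √(log(2/δ)/(2n))` where `θ̂ = φ(z₁,…,z_n)`. -/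
theorem algorithm_dependent_concentration
    {Θ : Type*} [MeasurableSpace Θ] {Z : Type*} [MeasurableSpace Z]
    (μ : Measure Z) [IsProbabilityMeasure μ]
    (f : Θ → Z → ℝ) (B : ℝ) (hB : 0 ≤ B)
    (hfmeas : Measurable (Function.uncurry f))
    (hdev : ∀ θ, ∀ z z' : Z, |f θ z - f θ z'| ≤ B)
    (n T : ℕ) (hTn : T < n)
    (φ : (Fin n → Z) → Θ) (hφmeas : Measurable φ)
    (I : Finset (Fin n)) (hI : I.card ≤ T)
    (hdep : ∀ z z' : Fin n → Z, (∀ i ∈ I, z i = z' i) → φ z = φ z')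
    (δ : ℝ) (hδ0 : 0 < δ) (hδ1 : δ < 1) :
    ENNReal.ofReal (1 - δ) ≤
      (Measure.pi fun _ : Fin n => μ)
        {z | |(1 / (n : ℝ)) * ∑ i, f (φ z) (z i) - ∫ z', f (φ z) z' ∂μ| ≤
          B * T / n + B * Real.sqrt (Real.log (2 / δ) / (2 * n))} := by
  classical
  have hnpos : 0 < n := lt_of_le_of_lt (Nat.zero_le T) hTn
  have hn0 : (0 : ℝ) < n := by exact_mod_cast hnpos
  have hZne : Nonempty Z := by
    by_contra h
    rw [not_nonempty_iff] at h
    have h1 : μ Set.univ = 1 := measure_univ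
    rw [Set.univ_eq_empty_iff.mpr h, measure_empty] at h1
    exact zero_ne_one h1
  obtain ⟨z₀⟩ := hZne
  set F : Θ → ℝ := fun θ => ∫ z', f θ z' ∂μ with hF
  set t' : ℝ := B * Real.sqrt (Real.log (2 / δ) / (2 * n)) with ht'
  set ν := Measure.pi fun _ : Fin n => μ with hν
  have hfθ : ∀ θ, Measurable (f θ) := fun θ => hfmeas.comp measurable_prodMk_left
  have hfint : ∀ θ, Integrable (f θ) μ := by
    intro θ
    apply integrable_of_abs_le (hfθ θ) (C := |f θ z₀| + B)
    intro z
    calc |f θ z| = |f θ z₀ + (f θ z - f θ z₀)| := by ring_nf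
      _ ≤ |f θ z₀| + |f θ z - f θ z₀| := abs_add_le _ _
      _ ≤ |f θ z₀| + B := by linarith [hdev θ z z₀]
  have hdevF : ∀ θ w, |f θ w - F θ| ≤ B := by
    intro θ w
    have h1 : f θ w - F θ = ∫ z', (f θ w - f θ z') ∂μ := by
      rw [integral_sub (integrable_const _) (hfint θ)]
      simp [hF]
    rw [h1]
    calc |∫ z', (f θ w - f θ z') ∂μ| ≤ ∫ z', |f θ w - f θ z'| ∂μ := by
          simpa [Real.norm_eq_abs] using
            norm_integral_le_integral_norm (fun z' => f θ w - f θ z') (μ := μ)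
      _ ≤ ∫ _ : Z, B ∂μ := integral_mono ((integrable_const _).sub (hfint θ)).abs
          (integrable_const B) (fun z' => hdev θ w z')
      _ = B := by simp
  -- measurability of the main event
  have hFsm : StronglyMeasurable F :=
    hfmeas.stronglyMeasurable.integral_prod_right'
  have hGmeas : Measurable (fun z : Fin n → Z =>
      (1 / (n : ℝ)) * ∑ i, f (φ z) (z i) - F (φ z)) := by
    apply Measurable.sub
    · apply Measurable.const_mul
      apply Finset.measurable_sum
      intro i _
      exact hfmeas.comp ((hφmeas.prodMk (measurable_pi_apply i)))
    · exact hFsm.measurable.comp hφmeas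
  set S : Set (Fin n → Z) := {z | |(1 / (n : ℝ)) * ∑ i, f (φ z) (z i) - F (φ z)| ≤
      B * T / n + t'} with hS_def
  have hSmeas : MeasurableSet S := measurableSet_le hGmeas.abs measurable_const
  show ENNReal.ofReal (1 - δ) ≤ ν S
  rcases eq_or_lt_of_le hB with hB0 | hBpos
  · -- B = 0
    have hSuniv : S = Set.univ := by
      apply Set.eq_univ_iff_forall.mpr
      intro z
      set θ := φ z with hθ
      have hfw : ∀ w w' : Z, f θ w = f θ w' := by
        intro w w'
        have := hdev θ w w'
        rw [← hB0] at this
        have := abs_nonpos_iff.mp (le_trans this le_rfl)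
        linarith
      have hFz : F θ = f θ z₀ := by
        show (∫ z', f θ z' ∂μ) = f θ z₀
        have hc : (fun z' => f θ z') = fun _ : Z => f θ z₀ := funext fun w => hfw w z₀
        rw [hc]
        simp
      have hsum : ∑ i : Fin n, f θ (z i) = n * f θ z₀ := by
        rw [Finset.sum_congr rfl fun i _ => hfw (z i) z₀]
        simp [Finset.card_univ, mul_comm]
      show |(1 / (n : ℝ)) * ∑ i, f θ (z i) - F θ| ≤ B * T / n + t'
      rw [hsum, hFz, ht', ← hB0]
      have : (1 / (n : ℝ)) * ((n : ℝ) * f θ z₀) - f θ z₀ = 0 := by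
        field_simp
        ring
      rw [this]
      simp
    rw [hSuniv]
    simp only [measure_univ]
    exact ENNReal.ofReal_le_one.mpr (by linarith)
  · -- B > 0
    set s : ℝ := n * t' with hs_def
    have hlog : 0 < Real.log (2 / δ) := Real.log_pos (by rw [lt_div_iff₀ hδ0]; linarith)
    have hsqrt_pos : 0 < Real.sqrt (Real.log (2 / δ) / (2 * n)) :=
      Real.sqrt_pos.mpr (by positivity)
    have ht'pos : 0 < t' := mul_pos hBpos hsqrt_pos
    have hspos : 0 < s := mul_pos hn0 ht'pos
    set E₁ : Set (Fin n → Z) :=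
      {z | s < |∑ j : {i : Fin n // ¬ i ∈ I}, (f (φ z) (z j.1) - F (φ z))|} with hE₁_def
    -- Step A : Sᶜ ⊆ E₁
    have hsub : Sᶜ ⊆ E₁ := by
      intro z hz
      by_contra hzE
      apply hz
      simp only [hE₁_def, Set.mem_setOf_eq, not_lt] at hzE
      set θ := φ z with hθ
      show |(1 / (n : ℝ)) * ∑ i, f θ (z i) - F θ| ≤ B * T / n + t'
      have hsplit : ∑ i : Fin n, (f θ (z i) - F θ) =
          (∑ i ∈ I, (f θ (z i) - F θ)) + ∑ j : {i : Fin n // ¬ i ∈ I}, (f θ (z j.1) - F θ) := by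
        rw [← Finset.sum_subtype (Iᶜ) (fun x => Finset.mem_compl) (fun i => f θ (z i) - F θ)]
        exact (Finset.sum_add_sum_compl I _).symm
      have hIbound : |∑ i ∈ I, (f θ (z i) - F θ)| ≤ B * T := by
        calc |∑ i ∈ I, (f θ (z i) - F θ)| ≤ ∑ i ∈ I, |f θ (z i) - F θ| :=
              Finset.abs_sum_le_sum_abs _ _
          _ ≤ I.card • B := Finset.sum_le_card_nsmul I _ B (fun i _ => hdevF θ (z i))
          _ = I.card * B := nsmul_eq_mul _ _
          _ ≤ T * B := by
              apply mul_le_mul_of_nonneg_right _ hB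
              exact_mod_cast hI
          _ = B * T := mul_comm _ _
      have htot : |∑ i : Fin n, (f θ (z i) - F θ)| ≤ B * T + s := by
        rw [hsplit]
        calc |(∑ i ∈ I, (f θ (z i) - F θ)) + ∑ j : {i : Fin n // ¬ i ∈ I}, (f θ (z j.1) - F θ)|
            ≤ |∑ i ∈ I, (f θ (z i) - F θ)| +
              |∑ j : {i : Fin n // ¬ i ∈ I}, (f θ (z j.1) - F θ)| := abs_add_le _ _
          _ ≤ B * T + s := add_le_add hIbound hzE
      have hexp : (1 / (n : ℝ)) * ∑ i, f θ (z i) - F θ =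
          (1 / (n : ℝ)) * ∑ i : Fin n, (f θ (z i) - F θ) := by
        rw [Finset.sum_sub_distrib, Finset.sum_const, Finset.card_univ, Fintype.card_fin,
          nsmul_eq_mul]
        field_simp
      rw [hexp, abs_mul, abs_of_pos (by positivity : (0:ℝ) < 1 / (n:ℝ))]
      calc (1 / (n : ℝ)) * |∑ i : Fin n, (f θ (z i) - F θ)|
          ≤ (1 / (n : ℝ)) * (B * T + s) := by
            apply mul_le_mul_of_nonneg_left htot (by positivity)
        _ = B * T / n + t' := by
            rw [hs_def]
            field_simp
    -- measurability of E₁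
    have hE₁meas : MeasurableSet E₁ := by
      apply measurableSet_lt measurable_const
      apply Measurable.abs
      apply Finset.measurable_sum
      intro j _
      exact (hfmeas.comp ((hφmeas.prodMk (measurable_pi_apply j.1)))).sub
        (hFsm.measurable.comp hφmeas)
    -- Step B : ν E₁ ≤ ofReal δ
    have hcard_pos : 0 < Fintype.card {i : Fin n // ¬ i ∈ I} := by
      rw [Fintype.card_subtype_compl]
      have h1 : Fintype.card {i : Fin n // i ∈ I} = I.card := Fintype.card_coe I
      rw [h1, Fintype.card_fin]
      omega
    have hcard_le : Fintype.card {i : Fin n // ¬ i ∈ I} ≤ n := by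
      rw [Fintype.card_subtype_compl, Fintype.card_fin]
      omega
    have hE₁bound : ν E₁ ≤ ENNReal.ofReal δ := by
      set e := MeasurableEquiv.piEquivPiSubtypeProd (fun _ : Fin n => Z) (fun i => i ∈ I) with he
      have hmp := measurePreserving_piEquivPiSubtypeProd (fun _ : Fin n => μ) (fun i => i ∈ I)
      have key := (MeasurePreserving.symm e hmp).measure_preimage_equiv E₁
      rw [show ν E₁ = _ from key.symm, Measure.prod_apply (e.symm.measurable hE₁meas)]
      refine le_trans (lintegral_mono (g := fun _ => ENNReal.ofReal δ) fun x => ?_) (by simp)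
      set T' := ⇑e.symm ⁻¹' E₁ with hT'
      set y₀ : ∀ _i : {i : Fin n // ¬ i ∈ I}, Z := fun _ => z₀ with hy₀
      set θ := φ (e.symm (x, y₀)) with hθ
      have hcoord : ∀ (y : ∀ _i : {i : Fin n // ¬ i ∈ I}, Z) (i : Fin n),
          e.symm (x, y) i = if h : i ∈ I then x ⟨i, h⟩ else y ⟨i, h⟩ := by
        intro y i
        rfl
      have hθy : ∀ y, φ (e.symm (x, y)) = θ := by
        intro y
        apply hdep
        intro i hi
        rw [hcoord y i, hcoord y₀ i, dif_pos hi, dif_pos hi]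
      have hset : Prod.mk x ⁻¹' T' =
          {y : ∀ _i : {i : Fin n // ¬ i ∈ I}, Z |
            s < |∑ j : {i : Fin n // ¬ i ∈ I}, (f θ (y j) - F θ)|} := by
        ext y
        simp only [hT', Set.mem_preimage, hE₁_def, Set.mem_setOf_eq]
        rw [hθy y]
        have : ∀ j : {i : Fin n // ¬ i ∈ I}, e.symm (x, y) j.1 = y j := by
          intro j
          rw [hcoord y j.1, dif_neg j.2]
        rw [Finset.sum_congr rfl fun j _ => by rw [this j]]
      rw [hset]
      -- bounds for f θ
      set R := Set.range (f θ) with hR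
      have hbdd : BddBelow R := ⟨f θ z₀ - B, by
        rintro _ ⟨w, rfl⟩
        linarith [(abs_le.mp (hdev θ z₀ w)).2]⟩
      have hne : R.Nonempty := ⟨f θ z₀, ⟨z₀, rfl⟩⟩
      set a := sInf R with ha
      have hlb : ∀ w, a ≤ f θ w := fun w => csInf_le hbdd ⟨w, rfl⟩
      have hub : ∀ w, f θ w ≤ a + B := by
        intro w
        have : f θ w - B ≤ a := le_csInf hne (by
          rintro _ ⟨w', rfl⟩
          linarith [(abs_le.mp (hdev θ w w')).2])
        linarith
      have htail := hoeffding_tail_two μ {i : Fin n // ¬ i ∈ I} (hfθ θ) hBpos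
        hspos.le hcard_pos hlb hub
      have hss : {y : (∀ _i : {i : Fin n // ¬ i ∈ I}, Z) |
            s < |∑ j : {i : Fin n // ¬ i ∈ I}, (f θ (y j) - F θ)|} ⊆
          {y : (∀ _i : {i : Fin n // ¬ i ∈ I}, Z) |
            s ≤ |∑ j : {i : Fin n // ¬ i ∈ I}, (f θ (y j) - ∫ z, f θ z ∂μ)|} :=
        by intro y hy
           simp only [Set.mem_setOf_eq] at hy ⊢
           exact le_of_lt hy
      refine le_trans (measure_mono hss) (le_trans htail (ENNReal.ofReal_le_ofReal ?_))
      · set m := ((Fintype.card {i : Fin n // ¬ i ∈ I}) : ℝ) with hm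
        have hmpos : (0 : ℝ) < m := by rw [hm]; exact_mod_cast hcard_pos
        have hmn : m ≤ (n : ℝ) := by rw [hm]; exact_mod_cast hcard_le
        have hs2 : s ^ 2 = n * B ^ 2 * Real.log (2 / δ) / 2 := by
          rw [hs_def, ht']
          rw [mul_pow, mul_pow, Real.sq_sqrt (by positivity)]
          field_simp
        have hexp_le : -2 * s ^ 2 / (m * B ^ 2) ≤ -Real.log (2 / δ) := by
          rw [hs2]
          rw [div_le_iff₀ (by positivity)]
          have heq : -2 * ((n : ℝ) * B ^ 2 * Real.log (2 / δ) / 2) =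
              -(n : ℝ) * B ^ 2 * Real.log (2 / δ) := by ring
          rw [heq]
          nlinarith [mul_le_mul_of_nonneg_right hmn (mul_nonneg hlog.le (sq_nonneg B))]
        calc 2 * Real.exp (-2 * s ^ 2 / (m * B ^ 2))
            ≤ 2 * Real.exp (-Real.log (2 / δ)) := by
              apply mul_le_mul_of_nonneg_left (Real.exp_le_exp.mpr hexp_le) (by norm_num)
          _ = 2 * (δ / 2) := by
              rw [Real.exp_neg, Real.exp_log (by positivity)]
              rw [inv_div]
          _ = δ := by ring
    -- Step C : conclude
    have hcompl : ν Sᶜ ≤ ENNReal.ofReal δ := le_trans (measure_mono hsub) hE₁bound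
    have hadd : ν S + ν Sᶜ = 1 := by
      rw [measure_add_measure_compl hSmeas]
      exact measure_univ
    have hνS : ν S = 1 - ν Sᶜ := by
      rw [← hadd]
      rw [ENNReal.add_sub_cancel_right (ne_top_of_le_ne_top (by simp) hcompl)]
    rw [hνS]
    have h1δ : ENNReal.ofReal (1 - δ) = 1 - ENNReal.ofReal δ := by
      rw [← ENNReal.ofReal_one, ← ENNReal.ofReal_sub _ hδ0.le]
    rw [h1δ]
    exact tsub_le_tsub_left hcompl 1
end

section
/- Let Θ ⊆ B_R(0) and suppose for each z ∈ Z the map g(·;z) : Θ → Θ is γ-contractive with γ ∈ (0,1), and f satisfies the weak Lipschitz condition with constant L and the bounded deviation condition with constant B. Fix T := max{⌈log(2LRn)/log(1/γ)⌉, 0}. Then for any fixed θ^(0) ∈ Θ, any t ≥ 0, and any fixed indices i_1,…,i_t ∈ [n], the iterate θ^(t) := g(·;z_{i_t}) ∘ ⋯ ∘ g(·;z_{i_1})(θ^(0)) satisfies |E_{z_1,…,z_n}[F̂(θ^(t)) − F(θ^(t))]| ≤ (BT + 1)/n, where F̂(θ) = (1/n)∑_i f(θ;z_i), F(θ) = E[f(θ;Z)],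 and z_1,…,z_n are i.i.d. -/
open MeasureTheory

/-- The SGD iterate obtained from the data `zs` along the index list
`l = [i₁, …, i_t]`, applying `g(·; zs i₁)` first. -/
def sgdIter {E : Type*} {Z : Type*} {n : ℕ} (g : Z → E → E) (zs : Fin n → Z)
    (l : List (Fin n)) (θ0 : E) : E :=
  l.foldl (fun acc i => g (zs i) acc) θ0

section Aux
variable {E : Type*} {Z : Type*} {n : ℕ}

lemma sgdIter_cons (g : Z → E → E) (zs : Fin n → Z) (a : Fin n) (l : List (Fin n)) (x : E) :
    sgdIter g zs (a :: l) x = sgdIter g zs l (g (zs a) x) := rfl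

lemma sgdIter_append (g : Z → E → E) (zs : Fin n → Z) (l1 l2 : List (Fin n)) (x : E) :
    sgdIter g zs (l1 ++ l2) x = sgdIter g zs l2 (sgdIter g zs l1 x) :=
  List.foldl_append

lemma sgdIter_mem {g : Z → E → E} {Θ : Set E} (hg : ∀ z, Set.MapsTo (g z) Θ Θ)
    (zs : Fin n → Z) (l : List (Fin n)) : ∀ {x : E}, x ∈ Θ → sgdIter g zs l x ∈ Θ := by
  induction l with
  | nil => exact fun hx => hx
  | cons a l ih => exact fun hx => ih (hg (zs a) hx)

lemma sgdIter_update_eq {g : Z → E → E} (zs : Fin n → Z) {i : Fin n} (z : Z)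
    {l : List (Fin n)} (hi : i ∉ l) (x : E) :
    sgdIter g (Function.update zs i z) l x = sgdIter g zs l x := by
  induction l generalizing x with
  | nil => rfl
  | cons a l ih =>
    have ha : a ≠ i := by rintro rfl; exact hi (List.mem_cons_self)
    rw [sgdIter_cons, sgdIter_cons, Function.update_of_ne ha,
      ih (fun h => hi (List.mem_cons_of_mem _ h))]

lemma sgdIter_contract [NormedAddCommGroup E] {g : Z → E → E} {Θ : Set E} {γ : ℝ}
    (hγ0 : 0 ≤ γ) (hg : ∀ z, Set.MapsTo (g z) Θ Θ)
    (hcontr : ∀ z : Z, ∀ θ ∈ Θ, ∀ θ' ∈ Θ, ‖g z θ - g z θ'‖ ≤ γ * ‖θ - θ'‖)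
    (zs : Fin n → Z) (l : List (Fin n)) :
    ∀ {x : E}, x ∈ Θ → ∀ {y : E}, y ∈ Θ →
      ‖sgdIter g zs l x - sgdIter g zs l y‖ ≤ γ ^ l.length * ‖x - y‖ := by
  induction l with
  | nil => intro x hx y hy; simp [sgdIter]
  | cons a l ih =>
    intro x hx y hy
    rw [sgdIter_cons, sgdIter_cons]
    calc ‖sgdIter g zs l (g (zs a) x) - sgdIter g zs l (g (zs a) y)‖
        ≤ γ ^ l.length * ‖g (zs a) x - g (zs a) y‖ := ih (hg _ hx) (hg _ hy)
      _ ≤ γ ^ l.length * (γ * ‖x - y‖) :=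
          mul_le_mul_of_nonneg_left (hcontr _ _ hx _ hy) (pow_nonneg hγ0 _)
      _ = γ ^ (a :: l).length * ‖x - y‖ := by rw [List.length_cons, pow_succ]; ring

lemma measurable_sgdIter [MeasurableSpace E] [MeasurableSpace Z]
    {g : Z → E → E} (hg : Measurable (Function.uncurry g)) (l : List (Fin n)) :
    ∀ {h : (Fin n → Z) → E}, Measurable h →
      Measurable fun zs : Fin n → Z => sgdIter g zs l (h zs) := by
  induction l with
  | nil => exact fun hh => hh
  | cons a l ih =>
    intro h hh
    exact ih (hg.comp ((measurable_pi_apply a).prodMk hh))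

end Aux

lemma measurePreserving_update_pi {Z : Type*} [MeasurableSpace Z] (μ : Measure Z)
    [IsProbabilityMeasure μ] {n : ℕ} (i : Fin n) :
    MeasurePreserving (fun p : (Fin n → Z) × Z => Function.update p.1 i p.2)
      ((Measure.pi fun _ : Fin n => μ).prod μ) (Measure.pi fun _ : Fin n => μ) := by
  refine ⟨measurable_update', ?_⟩
  refine (Measure.pi_eq fun s hs => ?_).symm
  rw [Measure.map_apply measurable_update' (MeasurableSet.univ_pi hs)]
  have hpre : (fun p : (Fin n → Z) × Z => Function.update p.1 i p.2) ⁻¹' Set.pi Set.univ s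
      = (Set.pi Set.univ (Function.update s i Set.univ)) ×ˢ s i := by
    ext ⟨zs, z⟩
    simp only [Set.mem_preimage, Set.mem_pi, Set.mem_univ, true_implies, Set.mem_prod,
      Function.update_apply]
    constructor
    · intro h
      refine ⟨fun j => ?_, by simpa using h i⟩
      by_cases hj : j = i
      · simp [hj]
      · simpa [hj] using h j
    · rintro ⟨h1, h2⟩ j
      by_cases hj : j = i
      · simpa [hj] using h2
      · simpa [hj] using h1 j
  rw [hpre, Measure.prod_prod, Measure.pi_pi]
  have h1 : ∀ j, μ (Function.update s i Set.univ j)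
      = Function.update (fun j => μ (s j)) i 1 j := by
    intro j
    by_cases hj : j = i <;> simp [hj, Function.update_apply]
  simp_rw [h1]
  rw [Finset.prod_update_of_mem (Finset.mem_univ i), one_mul,
    ← Finset.mul_prod_erase Finset.univ _ (Finset.mem_univ i),
    Finset.sdiff_singleton_eq_erase]
  exact mul_comm _ _

lemma abs_sub_integral_le {Z : Type*} [MeasurableSpace Z] (μ : Measure Z)
    [IsProbabilityMeasure μ] {g : Z → ℝ} (hg : Integrable g μ) {B : ℝ}
    (hdev : ∀ z z', |g z - g z'| ≤ B) (z0 : Z) :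
    |g z0 - ∫ z, g z ∂μ| ≤ B := by
  have h1 : g z0 - ∫ z, g z ∂μ = ∫ z, (g z0 - g z) ∂μ := by
    rw [integral_sub (integrable_const _) hg, integral_const, probReal_univ,
      one_smul]
  rw [h1]
  calc |∫ z, (g z0 - g z) ∂μ| ≤ B * (μ Set.univ).toReal := by
        rw [← Real.norm_eq_abs]
        exact norm_integral_le_of_norm_le_const (ae_of_all _ fun z => by
          rw [Real.norm_eq_abs]; exact hdev z0 z)
    _ = B := by simp [measure_univ]

lemma integral_indep_eq_zero {d n : ℕ} {Z : Type*} [MeasurableSpace Z] (μ : Measure Z)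
    [IsProbabilityMeasure μ] {Θ : Set (EuclideanSpace ℝ (Fin d))}
    {f : EuclideanSpace ℝ (Fin d) → Z → ℝ} (hfmeas : Measurable (Function.uncurry f))
    (hint : ∀ θ ∈ Θ, Integrable (f θ) μ)
    {B : ℝ} (hdev : ∀ θ ∈ Θ, ∀ z z' : Z, |f θ z - f θ z'| ≤ B)
    {w : (Fin n → Z) → EuclideanSpace ℝ (Fin d)} (hw : Measurable w)
    (hwΘ : ∀ zs, w zs ∈ Θ)
    (i : Fin n) (hind : ∀ zs z, w (Function.update zs i z) = w zs) :
    ∫ zs, (f (w zs) (zs i) - ∫ z, f (w zs) z ∂μ) ∂(Measure.pi fun _ : Fin n => μ) = 0 := by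
  set P : Measure (Fin n → Z) := Measure.pi fun _ : Fin n => μ with hP
  have mF : StronglyMeasurable fun x : EuclideanSpace ℝ (Fin d) => ∫ z, f x z ∂μ := by
    have := (hfmeas.stronglyMeasurable).integral_prod_right' (ν := μ)
    simpa [Function.uncurry] using this
  have Gmeas : Measurable fun zs : Fin n → Z => f (w zs) (zs i) - ∫ z, f (w zs) z ∂μ := by
    have h1 : Measurable fun zs : Fin n → Z => f (w zs) (zs i) :=
      hfmeas.comp (hw.prodMk (measurable_pi_apply i))
    exact h1.sub (mF.measurable.comp hw)
  have hmp := measurePreserving_update_pi (n := n) μ i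
  rw [← hP] at hmp
  have hGbd : ∀ (θ : EuclideanSpace ℝ (Fin d)), θ ∈ Θ → ∀ z0 : Z,
      |f θ z0 - ∫ z, f θ z ∂μ| ≤ B := fun θ hθ z0 =>
    abs_sub_integral_le μ (hint θ hθ) (hdev θ hθ) z0
  have key := integral_map (φ := fun p : (Fin n → Z) × Z => Function.update p.1 i p.2)
    (μ := P.prod μ) hmp.measurable.aemeasurable
    (f := fun zs => f (w zs) (zs i) - ∫ z, f (w zs) z ∂μ)
    (by rw [hmp.map_eq]; exact Gmeas.aestronglyMeasurable)
  rw [hmp.map_eq] at key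
  have step1 : ∫ zs, (f (w zs) (zs i) - ∫ z, f (w zs) z ∂μ) ∂P
      = ∫ p : (Fin n → Z) × Z, (f (w p.1) p.2 - ∫ z, f (w p.1) z ∂μ) ∂(P.prod μ) := by
    rw [key]
    congr 1
    funext p
    simp only [hind, Function.update_self]
  rw [step1]
  have Hmeas : Measurable fun p : (Fin n → Z) × Z => f (w p.1) p.2 - ∫ z, f (w p.1) z ∂μ := by
    have h1 : Measurable fun p : (Fin n → Z) × Z => f (w p.1) p.2 :=
      hfmeas.comp ((hw.comp measurable_fst).prodMk measurable_snd)
    exact h1.sub (mF.measurable.comp (hw.comp measurable_fst))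
  have HInt : Integrable (fun p : (Fin n → Z) × Z => f (w p.1) p.2 - ∫ z, f (w p.1) z ∂μ)
      (P.prod μ) := by
    refine ⟨Hmeas.aestronglyMeasurable, HasFiniteIntegral.of_bounded (C := B)
      (ae_of_all _ fun p => ?_)⟩
    rw [Real.norm_eq_abs]
    exact hGbd _ (hwΘ p.1) p.2
  rw [integral_prod _ HInt]
  have hinner : ∀ zs : Fin n → Z,
      ∫ z, (f (w zs) z - ∫ z', f (w zs) z' ∂μ) ∂μ = 0 := by
    intro zs
    rw [integral_sub (hint _ (hwΘ zs)) (integrable_const _), integral_const, probReal_univ,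
      one_smul, sub_self]
  simp only [hinner, integral_zero]

/-- Expected generalization gap bound for a contractive iterative stochastic
algorithm: under weak Lipschitzness and bounded deviation, for
`T = max{⌈log(2LRn)/log(1/γ)⌉, 0}` and any fixed initialization and index
sequence, `|E[F̂(θ^(t)) − F(θ^(t))]| ≤ (BT + 1)/n`. -/
theorem expected_generalization_gap
    {d n : ℕ} {Z : Type*} [MeasurableSpace Z]
    (μ : Measure Z) [IsProbabilityMeasure μ]
    (R γ L B : ℝ) (hR : 0 < R) (hγ0 : 0 < γ) (hγ1 : γ < 1)
    (hL : 0 < L) (hB : 0 ≤ B) (hn : 0 < n)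
    (Θ : Set (EuclideanSpace ℝ (Fin d)))
    (hΘR : Θ ⊆ Metric.closedBall 0 R) (h0 : (0 : EuclideanSpace ℝ (Fin d)) ∈ Θ)
    (g : Z → EuclideanSpace ℝ (Fin d) → EuclideanSpace ℝ (Fin d))
    (hgmaps : ∀ z : Z, Set.MapsTo (g z) Θ Θ)
    (hcontr : ∀ z : Z, ∀ θ ∈ Θ, ∀ θ' ∈ Θ, ‖g z θ - g z θ'‖ ≤ γ * ‖θ - θ'‖)
    (f : EuclideanSpace ℝ (Fin d) → Z → ℝ)
    (hf : EuclideanSpace ℝ (Fin d) → ℝ)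
    (hweakLip : ∀ θ ∈ Θ, ∀ θ' ∈ Θ, ∀ z : Z,
      |f θ z - hf θ - (f θ' z - hf θ')| ≤ L * ‖θ - θ'‖)
    (hdev : ∀ θ ∈ Θ, ∀ z z' : Z, |f θ z - f θ z'| ≤ B)
    (hfmeas : Measurable (Function.uncurry f))
    (hgmeas : Measurable (Function.uncurry g))
    (hint : ∀ θ ∈ Θ, Integrable (f θ) μ)
    (T : ℕ)
    (hT : (T : ℤ) = max ⌈Real.log (2 * L * R * n) / Real.log (1 / γ)⌉ 0)
    (θ0 : EuclideanSpace ℝ (Fin d)) (hθ0 : θ0 ∈ Θ)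
    (l : List (Fin n))
    (hintall : Integrable
      (fun zs : Fin n → Z =>
        (1 / (n : ℝ)) * ∑ i, f (sgdIter g zs l θ0) (zs i) -
          ∫ z, f (sgdIter g zs l θ0) z ∂μ)
      (Measure.pi fun _ : Fin n => μ)) :
    |∫ zs : Fin n → Z,
        ((1 / (n : ℝ)) * ∑ i, f (sgdIter g zs l θ0) (zs i) -
          ∫ z, f (sgdIter g zs l θ0) z ∂μ)
      ∂(Measure.pi fun _ : Fin n => μ)| ≤ (B * T + 1) / n := by
  classical
  set P : Measure (Fin n → Z) := Measure.pi fun _ : Fin n => μ with hP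
  haveI : IsProbabilityMeasure P := by rw [hP]; infer_instance
  have hn' : (0:ℝ) < n := by exact_mod_cast hn
  have hn'' : (n:ℝ) ≠ 0 := hn'.ne'
  -- γ ^ T ≤ 1 / (2 L R n)
  have hlogγ : 0 < Real.log (1/γ) := by
    rw [one_div, Real.log_inv]
    linarith [Real.log_neg hγ0 hγ1]
  have hTge : Real.log (2*L*R*n) / Real.log (1/γ) ≤ (T:ℝ) := by
    have h1 : (⌈Real.log (2*L*R*n) / Real.log (1/γ)⌉ : ℤ) ≤ (T:ℤ) := hT ▸ le_max_left _ _
    exact_mod_cast Int.ceil_le.mp h1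
  have hc : (0:ℝ) < 2*L*R*n := by positivity
  have hpow : γ ^ T ≤ 1 / (2*L*R*n) := by
    have h2 : Real.log (2*L*R*n) ≤ (T:ℝ) * Real.log (1/γ) := by
      rw [div_le_iff₀ hlogγ] at hTge; linarith
    have h3 : (T:ℝ) * Real.log γ ≤ Real.log (1/(2*L*R*n)) := by
      rw [one_div, Real.log_inv]
      rw [one_div, Real.log_inv] at h2
      nlinarith
    calc γ ^ T = γ ^ (T:ℝ) := by rw [Real.rpow_natCast]
      _ = Real.exp (Real.log γ * (T:ℝ)) := Real.rpow_def_of_pos hγ0 _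
      _ ≤ Real.exp (Real.log (1/(2*L*R*n))) := Real.exp_le_exp.mpr (by linarith [h3])
      _ = 1/(2*L*R*n) := Real.exp_log (by positivity)
  set t := l.length with ht'
  set l2 := l.drop (t - T) with hl2
  have hl2len : l2.length = t - (t - T) := List.length_drop
  set x0 : EuclideanSpace ℝ (Fin d) := if T ≤ t then 0 else θ0 with hx0
  have hx0Θ : x0 ∈ Θ := by
    rw [hx0]; split
    · exact h0
    · exact hθ0
  have hθΘ : ∀ zs : Fin n → Z, sgdIter g zs l θ0 ∈ Θ :=
    fun zs => sgdIter_mem hgmaps zs l hθ0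
  have hφΘ : ∀ zs : Fin n → Z, sgdIter g zs l2 x0 ∈ Θ :=
    fun zs => sgdIter_mem hgmaps zs l2 hx0Θ
  have herr : ∀ zs : Fin n → Z, ‖sgdIter g zs l θ0 - sgdIter g zs l2 x0‖ ≤ 1/(2*L*n) := by
    intro zs
    by_cases hTt : T ≤ t
    · have hsplit : sgdIter g zs l θ0
          = sgdIter g zs l2 (sgdIter g zs (l.take (t-T)) θ0) := by
        conv_lhs => rw [← List.take_append_drop (t-T) l]
        rw [sgdIter_append]
      rw [hsplit]
      have hmem := sgdIter_mem hgmaps zs (l.take (t-T)) hθ0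
      have hcon := sgdIter_contract hγ0.le hgmaps hcontr zs l2 hmem hx0Θ
      have hx0' : x0 = 0 := if_pos hTt
      have hlen : l2.length = T := by rw [hl2len]; exact Nat.sub_sub_self hTt
      calc ‖sgdIter g zs l2 (sgdIter g zs (l.take (t-T)) θ0) - sgdIter g zs l2 x0‖
          ≤ γ ^ l2.length * ‖sgdIter g zs (l.take (t-T)) θ0 - x0‖ := hcon
        _ ≤ γ ^ T * R := by
            rw [hlen, hx0', sub_zero]
            exact mul_le_mul_of_nonneg_left
              (mem_closedBall_zero_iff.mp (hΘR hmem)) (pow_nonneg hγ0.le _)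
        _ ≤ (1/(2*L*R*n)) * R := mul_le_mul_of_nonneg_right hpow hR.le
        _ = 1/(2*L*n) := by field_simp
    · have hll : l2 = l := by
        rw [hl2, Nat.sub_eq_zero_of_le (le_of_not_ge hTt), List.drop_zero]
      have hx0' : x0 = θ0 := if_neg hTt
      rw [hll, hx0', sub_self, norm_zero]
      positivity
  have hcard : (l2.toFinset.card : ℝ) ≤ T := by
    have h1 : l2.toFinset.card ≤ l2.length := l2.toFinset_card_le
    have hsubT : t - (t - T) ≤ T := by
      rcases le_total T t with h | h
      · rw [Nat.sub_sub_self h]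
      · rw [Nat.sub_eq_zero_of_le h, Nat.sub_zero]; exact h
    have h2 : l2.toFinset.card ≤ T := le_trans h1 (hl2len ▸ hsubT)
    exact_mod_cast h2
  -- measurability
  have mθ : Measurable fun zs : Fin n → Z => sgdIter g zs l θ0 :=
    measurable_sgdIter hgmeas l measurable_const
  have mφ : Measurable fun zs : Fin n → Z => sgdIter g zs l2 x0 :=
    measurable_sgdIter hgmeas l2 measurable_const
  have mF : StronglyMeasurable fun x : EuclideanSpace ℝ (Fin d) => ∫ z, f x z ∂μ := by
    have := (hfmeas.stronglyMeasurable).integral_prod_right' (ν := μ)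
    simpa [Function.uncurry] using this
  have hGθmeas : ∀ i : Fin n, Measurable fun zs : Fin n → Z =>
      f (sgdIter g zs l θ0) (zs i) - ∫ z, f (sgdIter g zs l θ0) z ∂μ := fun i =>
    (hfmeas.comp (mθ.prodMk (measurable_pi_apply i))).sub (mF.measurable.comp mθ)
  have hGφmeas : ∀ i : Fin n, Measurable fun zs : Fin n → Z =>
      f (sgdIter g zs l2 x0) (zs i) - ∫ z, f (sgdIter g zs l2 x0) z ∂μ := fun i =>
    (hfmeas.comp (mφ.prodMk (measurable_pi_apply i))).sub (mF.measurable.comp mφ)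
  have hGθbd : ∀ (i : Fin n) (zs : Fin n → Z),
      |f (sgdIter g zs l θ0) (zs i) - ∫ z, f (sgdIter g zs l θ0) z ∂μ| ≤ B := fun i zs =>
    abs_sub_integral_le μ (hint _ (hθΘ zs)) (hdev _ (hθΘ zs)) (zs i)
  have hGφbd : ∀ (i : Fin n) (zs : Fin n → Z),
      |f (sgdIter g zs l2 x0) (zs i) - ∫ z, f (sgdIter g zs l2 x0) z ∂μ| ≤ B := fun i zs =>
    abs_sub_integral_le μ (hint _ (hφΘ zs)) (hdev _ (hφΘ zs)) (zs i)
  have hGθint : ∀ i : Fin n, Integrable (fun zs : Fin n → Z =>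
      f (sgdIter g zs l θ0) (zs i) - ∫ z, f (sgdIter g zs l θ0) z ∂μ) P := fun i =>
    ⟨(hGθmeas i).aestronglyMeasurable, HasFiniteIntegral.of_bounded (C := B)
      (ae_of_all _ fun zs => by rw [Real.norm_eq_abs]; exact hGθbd i zs)⟩
  have hGφint : ∀ i : Fin n, Integrable (fun zs : Fin n → Z =>
      f (sgdIter g zs l2 x0) (zs i) - ∫ z, f (sgdIter g zs l2 x0) z ∂μ) P := fun i =>
    ⟨(hGφmeas i).aestronglyMeasurable, HasFiniteIntegral.of_bounded (C := B)
      (ae_of_all _ fun zs => by rw [Real.norm_eq_abs]; exact hGφbd i zs)⟩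
  -- pointwise difference bound
  have hdiffbd : ∀ (i : Fin n) (zs : Fin n → Z),
      |(f (sgdIter g zs l θ0) (zs i) - ∫ z, f (sgdIter g zs l θ0) z ∂μ) -
        (f (sgdIter g zs l2 x0) (zs i) - ∫ z, f (sgdIter g zs l2 x0) z ∂μ)| ≤ 1/n := by
    intro i zs
    set θz := sgdIter g zs l θ0 with hθz'
    set φz := sgdIter g zs l2 x0 with hφz'
    have hθz := hθΘ zs
    have hφz := hφΘ zs
    have hD : L * ‖θz - φz‖ ≤ 1/(2*n) := by
      calc L * ‖θz - φz‖ ≤ L * (1/(2*L*n)) :=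
            mul_le_mul_of_nonneg_left (herr zs) hL.le
        _ = 1/(2*n) := by field_simp
    have hu : ∀ z : Z, |(f θz z - f φz z) - (hf θz - hf φz)| ≤ 1/(2*n) := by
      intro z
      have h1 := hweakLip θz hθz φz hφz z
      have h2 : (f θz z - f φz z) - (hf θz - hf φz) = f θz z - hf θz - (f φz z - hf φz) := by
        ring
      rw [h2]
      exact h1.trans hD
    have hint1 : Integrable (fun z => f θz z - f φz z) μ := (hint _ hθz).sub (hint _ hφz)
    have hintu : Integrable (fun z => (f θz z - f φz z) - (hf θz - hf φz)) μ :=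
      hint1.sub (integrable_const _)
    have hIu : ∫ z, f θz z ∂μ - ∫ z, f φz z ∂μ
        = (∫ z, ((f θz z - f φz z) - (hf θz - hf φz)) ∂μ) + (hf θz - hf φz) := by
      rw [← integral_sub (hint _ hθz) (hint _ hφz)]
      rw [show (fun z => f θz z - f φz z)
          = fun z => ((f θz z - f φz z) - (hf θz - hf φz)) + (hf θz - hf φz) by
        funext z; ring]
      rw [integral_add hintu (integrable_const _), integral_const, probReal_univ,
        one_smul]
    have habsint : |∫ z, ((f θz z - f φz z) - (hf θz - hf φz)) ∂μ| ≤ 1/(2*n) := by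
      rw [← Real.norm_eq_abs]
      calc ‖∫ z, ((f θz z - f φz z) - (hf θz - hf φz)) ∂μ‖
          ≤ (1/(2*n)) * (μ Set.univ).toReal :=
            norm_integral_le_of_norm_le_const (ae_of_all _ fun z => by
              rw [Real.norm_eq_abs]; exact hu z)
        _ = 1/(2*n) := by simp
    have heq : (f θz (zs i) - ∫ z, f θz z ∂μ) - (f φz (zs i) - ∫ z, f φz z ∂μ)
        = ((f θz (zs i) - f φz (zs i)) - (hf θz - hf φz))
          - ∫ z, ((f θz z - f φz z) - (hf θz - hf φz)) ∂μ := by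
      linear_combination -hIu
    rw [heq]
    calc |((f θz (zs i) - f φz (zs i)) - (hf θz - hf φz))
          - ∫ z, ((f θz z - f φz z) - (hf θz - hf φz)) ∂μ|
        ≤ |(f θz (zs i) - f φz (zs i)) - (hf θz - hf φz)|
          + |∫ z, ((f θz z - f φz z) - (hf θz - hf φz)) ∂μ| := abs_sub _ _
      _ ≤ 1/(2*n) + 1/(2*n) := add_le_add (hu _) habsint
      _ = 1/n := by
          rw [← add_div, div_eq_div_iff (by positivity) hn'']
          ring
  -- per-index integral bounds
  have hIθ : ∀ i : Fin n,
      |∫ zs, (f (sgdIter g zs l θ0) (zs i) - ∫ z, f (sgdIter g zs l θ0) z ∂μ) ∂P|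
      ≤ |∫ zs, (f (sgdIter g zs l2 x0) (zs i) - ∫ z, f (sgdIter g zs l2 x0) z ∂μ) ∂P|
        + 1/n := by
    intro i
    have hsub : Integrable (fun zs : Fin n → Z =>
        (f (sgdIter g zs l θ0) (zs i) - ∫ z, f (sgdIter g zs l θ0) z ∂μ) -
        (f (sgdIter g zs l2 x0) (zs i) - ∫ z, f (sgdIter g zs l2 x0) z ∂μ)) P :=
      (hGθint i).sub (hGφint i)
    have h1 : ∫ zs, (f (sgdIter g zs l θ0) (zs i) - ∫ z, f (sgdIter g zs l θ0) z ∂μ) ∂P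
        = ∫ zs, (f (sgdIter g zs l2 x0) (zs i) - ∫ z, f (sgdIter g zs l2 x0) z ∂μ) ∂P
          + ∫ zs, ((f (sgdIter g zs l θ0) (zs i) - ∫ z, f (sgdIter g zs l θ0) z ∂μ) -
              (f (sgdIter g zs l2 x0) (zs i) - ∫ z, f (sgdIter g zs l2 x0) z ∂μ)) ∂P := by
      rw [← integral_add (hGφint i) hsub]
      congr 1
      funext zs
      ring
    rw [h1]
    have h2 : |∫ zs, ((f (sgdIter g zs l θ0) (zs i) - ∫ z, f (sgdIter g zs l θ0) z ∂μ) -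
        (f (sgdIter g zs l2 x0) (zs i) - ∫ z, f (sgdIter g zs l2 x0) z ∂μ)) ∂P| ≤ 1/n := by
      rw [← Real.norm_eq_abs]
      calc ‖_‖ ≤ (1/(n:ℝ)) * (P Set.univ).toReal :=
            norm_integral_le_of_norm_le_const (ae_of_all _ fun zs => by
              rw [Real.norm_eq_abs]; exact hdiffbd i zs)
        _ = 1/n := by simp
    exact (abs_add_le _ _).trans (add_le_add_right h2 _)
  have hIφ : ∀ i : Fin n,
      |∫ zs, (f (sgdIter g zs l2 x0) (zs i) - ∫ z, f (sgdIter g zs l2 x0) z ∂μ) ∂P|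
      ≤ if i ∈ l2.toFinset then B else 0 := by
    intro i
    by_cases hi : i ∈ l2.toFinset
    · rw [if_pos hi, ← Real.norm_eq_abs]
      calc ‖_‖ ≤ B * (P Set.univ).toReal :=
            norm_integral_le_of_norm_le_const (ae_of_all _ fun zs => by
              rw [Real.norm_eq_abs]; exact hGφbd i zs)
        _ = B := by simp
    · rw [if_neg hi]
      have h0' : ∫ zs, (f (sgdIter g zs l2 x0) (zs i)
          - ∫ z, f (sgdIter g zs l2 x0) z ∂μ) ∂P = 0 := by
        rw [hP]
        exact integral_indep_eq_zero μ hfmeas hint hdev mφ hφΘ i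
          (fun zs z => sgdIter_update_eq zs z (fun h => hi (List.mem_toFinset.mpr h)) x0)
      rw [h0', abs_zero]
  -- rewrite the goal
  have hsum : ∀ zs : Fin n → Z,
      (1 / (n : ℝ)) * ∑ i, f (sgdIter g zs l θ0) (zs i) -
        ∫ z, f (sgdIter g zs l θ0) z ∂μ
      = (1 / (n : ℝ)) * ∑ i : Fin n,
          (f (sgdIter g zs l θ0) (zs i) - ∫ z, f (sgdIter g zs l θ0) z ∂μ) := by
    intro zs
    rw [Finset.sum_sub_distrib, Finset.sum_const, Finset.card_univ, Fintype.card_fin,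
      nsmul_eq_mul, mul_sub, ← mul_assoc]
    congr 1
    field_simp
  simp only [hsum]
  rw [integral_const_mul, integral_finset_sum Finset.univ (fun i _ => hGθint i)]
  rw [abs_mul, abs_of_nonneg (by positivity : (0:ℝ) ≤ 1/(n:ℝ))]
  calc (1/(n:ℝ)) * |∑ i : Fin n, ∫ zs,
        (f (sgdIter g zs l θ0) (zs i) - ∫ z, f (sgdIter g zs l θ0) z ∂μ) ∂P|
      ≤ (1/(n:ℝ)) * ∑ i : Fin n, |∫ zs,
        (f (sgdIter g zs l θ0) (zs i) - ∫ z, f (sgdIter g zs l θ0) z ∂μ) ∂P| :=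
        mul_le_mul_of_nonneg_left (Finset.abs_sum_le_sum_abs _ _) (by positivity)
    _ ≤ (1/(n:ℝ)) * ∑ i : Fin n, ((if i ∈ l2.toFinset then B else 0) + 1/n) := by
        refine mul_le_mul_of_nonneg_left (Finset.sum_le_sum fun i _ => ?_) (by positivity)
        exact (hIθ i).trans (add_le_add_left (hIφ i) _)
    _ = (1/(n:ℝ)) * ((∑ i : Fin n, if i ∈ l2.toFinset then B else 0) + 1) := by
        rw [Finset.sum_add_distrib, Finset.sum_const, Finset.card_univ, Fintype.card_fin,
          nsmul_eq_mul]
        congr 1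
        congr 1
        field_simp
    _ ≤ (1/(n:ℝ)) * (B * T + 1) := by
        refine mul_le_mul_of_nonneg_left (add_le_add_left ?_ _) (by positivity)
        have hS : (∑ i : Fin n, if i ∈ l2.toFinset then B else 0)
            = l2.toFinset.card * B := by
          rw [Finset.sum_ite_mem, Finset.univ_inter, Finset.sum_const, nsmul_eq_mul]
        rw [hS]
        calc (l2.toFinset.card : ℝ) * B ≤ (T:ℝ) * B :=
              mul_le_mul_of_nonneg_right hcard hB
          _ = B * T := mul_comm _ _
    _ = (B * T + 1) / n := by ring
end
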